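/- arXiv:2203.06978 — 4 statements merged into one kernel-verified Lean document; each statement's English description precedes it below -/
import Mathlib

section
/- Let k ≥ 1 and d ≥ 2, and let G be a simple k-connected graph of order n and diameter d having the maximum number of edges among all simple k-connected graphs of order n and diameter d. Let x and y be vertices of G with d_G(x, y) = d. Then for every integer i with 0 ≤ i ≤ d-1, the set N_i(x) ∪ N_{i+1}(x) induces a clique in G. -/
/-- A graph is `k`-connected if it has more than `k` vertices and remains connected
whenever fewer than `k` vertices are deleted. -/
def SimpleGraph.KConnected {V : Type*} [Fintype V] (k : ℕ) (G : SimpleGraph V) : Prop :=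
  k < Fintype.card V ∧ ∀ S : Set V, S.ncard < k → (G.induce Sᶜ).Connected

/-- Let `G` be a simple `k`-connected graph of order `n` and diameter `d ≥ 2` having the
maximum number of edges among all simple `k`-connected graphs of order `n` and diameter
`d`, and let `x, y` be vertices with `d_G(x, y) = d`.  Then for every `0 ≤ i ≤ d-1` the
set `N_i(x) ∪ N_{i+1}(x)` of vertices at distance `i` or `i+1` from `x` induces a clique. -/
theorem levels_clique_of_maximal (k d n : ℕ) {V : Type} [Fintype V] (G : SimpleGraph V)
    (hk : 1 ≤ k) (hd : 2 ≤ d)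
    (hG : G.KConnected k) (hcard : Fintype.card V = n) (hdiam : G.diam = d)
    (hmax : ∀ (W : Type) [Fintype W] (H : SimpleGraph W),
      H.KConnected k → Fintype.card W = n → H.diam = d →
      H.edgeSet.ncard ≤ G.edgeSet.ncard)
    (x y : V) (hxy : G.dist x y = d) :
    ∀ i : ℕ, i ≤ d - 1 → ∀ u v : V, u ≠ v →
      (G.dist x u = i ∨ G.dist x u = i + 1) →
      (G.dist x v = i ∨ G.dist x v = i + 1) → G.Adj u v := by
  intro i _hi u v huv hu hv
  by_contra hadj
  -- the graph with one more edge
  set G' : SimpleGraph V := G ⊔ SimpleGraph.fromEdgeSet {s(u, v)} with hG'def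
  have hle : G ≤ G' := le_sup_left
  -- G is connected
  have hconn : G.Connected := by
    have h := hG.2 ∅ (by simp only [Set.ncard_empty]; omega)
    rw [Set.compl_empty] at h
    exact (SimpleGraph.induceUnivIso G).connected_iff.mp h
  have hconn' : G'.Connected := hconn.mono hle
  -- distance bounds for u and v
  have hui : i ≤ G.dist x u ∧ G.dist x u ≤ i + 1 := by
    rcases hu with h | h <;> omega
  have hvi : i ≤ G.dist x v ∧ G.dist x v ≤ i + 1 := by
    rcases hv with h | h <;> omega
  -- adjacency in G' increases distance from x (in G) by at most one
  have step : ∀ a b : V, G'.Adj a b → G.dist x b ≤ G.dist x a + 1 := by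
    intro a b hab
    rw [hG'def, SimpleGraph.sup_adj, SimpleGraph.fromEdgeSet_adj] at hab
    rcases hab with hab | ⟨hab, -⟩
    · calc G.dist x b ≤ G.dist x a + G.dist a b := hconn.dist_triangle
        _ ≤ G.dist x a + 1 := by
            have : G.dist a b = 1 := SimpleGraph.dist_eq_one_iff_adj.mpr hab
            omega
    · simp only [Set.mem_singleton_iff, Sym2.eq, Sym2.rel_iff', Prod.mk.injEq,
        Prod.swap_prod_mk] at hab
      rcases hab with ⟨rfl, rfl⟩ | ⟨rfl, rfl⟩ <;> omega
  -- hence distances from x in G are bounded by walk lengths in G'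
  have walkbound : ∀ (a b : V) (p : G'.Walk a b), G.dist x b ≤ G.dist x a + p.length := by
    intro a b p
    induction p with
    | nil => simp
    | @cons a c b h q ih =>
        have h1 := step a c h
        simp only [SimpleGraph.Walk.length_cons]
        omega
  -- so distances from x are unchanged
  have hdist' : G'.dist x y = d := by
    have h1 : G'.dist x y ≤ G.dist x y := (hconn x y).dist_anti hle
    have h2 : G.dist x y ≤ G'.dist x y := by
      obtain ⟨p, hp⟩ := hconn'.exists_walk_length_eq_dist x y
      have := walkbound x y p
      rw [hp] at this
      simpa [SimpleGraph.dist_self] using this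
    omega
  -- G has finite eccentricities
  have hnt : G.ediam ≠ ⊤ :=
    SimpleGraph.ediam_ne_top_of_diam_ne_zero (by omega)
  have hnt' : G'.ediam ≠ ⊤ := by
    intro h
    exact hnt (top_le_iff.mp (h ▸ SimpleGraph.ediam_anti hle))
  -- G' has diameter d
  have hdiam' : G'.diam = d := by
    have hle1 : G'.diam ≤ d := hdiam ▸ SimpleGraph.diam_anti_of_ediam_ne_top hle hnt
    have hle2 : d ≤ G'.diam := hdist' ▸ SimpleGraph.dist_le_diam hnt'
    omega
  -- G' is k-connected
  have hK' : G'.KConnected k := by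
    refine ⟨hG.1, fun S hS => (hG.2 S hS).mono ?_⟩
    intro a b h
    exact hle h
  -- G' has one more edge
  have hedge : G'.edgeSet = insert s(u, v) G.edgeSet := by
    rw [hG'def, SimpleGraph.edgeSet_sup, SimpleGraph.edgeSet_fromEdgeSet]
    have : ({s(u, v)} : Set (Sym2 V)) \ {e | e.IsDiag} = {s(u, v)} := by
      ext e
      simp +contextual [Sym2.mk_isDiag_iff, huv]
    rw [Sym2.diagSet_eq_setOfPred_isDiag, this, Set.union_singleton]
  have hcount : G'.edgeSet.ncard = G.edgeSet.ncard + 1 := by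
    rw [hedge, Set.ncard_insert_of_notMem (by simpa using hadj) G.edgeSet.toFinite]
  have := hmax V G' hK' hcard hdiam'
  omega
end

section
/- Let k ≥ 1 and d ≥ 2 be integers and let T = T₁ ∨ T₂ ∨ ⋯ ∨ T_{d+1} be the sequential join with T₁ = T_{d+1} = K₁ and T₂ = ⋯ = T_d = K_k. Then T is a k-connected graph of order kd - k + 2 and diameter d, and its number of edges is ((3d-5)k² + (5-d)k)/2; moreover, the distance in T between the vertex of T₁ and the vertex of T_{d+1} equals d. -/
/-- The level of a vertex `v` of the sequential join
`T = T₁ ∨ T₂ ∨ ⋯ ∨ T_{d+1}` with `T₁ = T_{d+1} = K₁` and `T₂ = ⋯ = T_d = K_k`: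
vertex `0` is the vertex of `T₁` (level `0`), vertices `1, …, k*(d-1)` form the middle
copies of `K_k` (levels `1, …, d-1`, `k` vertices each), and vertex `k*(d-1)+1` is the
vertex of `T_{d+1}` (level `d`). -/
def oreLevel (k d v : ℕ) : ℕ :=
  if v = 0 then 0 else if v ≤ k * (d - 1) then (v - 1) / k + 1 else d

/-- The sequential join `T = T₁ ∨ T₂ ∨ ⋯ ∨ T_{d+1}` with `T₁ = T_{d+1} = K₁` and
`T₂ = ⋯ = T_d = K_k`: two distinct vertices are adjacent iff their levels differ by at
most `1`. -/
def seqJoinT (k d : ℕ) : SimpleGraph (Fin (k * (d - 1) + 2)) :=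
  SimpleGraph.fromRel fun v w =>
    oreLevel k d v.val ≤ oreLevel k d w.val + 1 ∧ oreLevel k d w.val ≤ oreLevel k d v.val + 1

namespace SeqJoinTAux

open Finset SimpleGraph

variable {k d : ℕ}

lemma level_le (hk : 1 ≤ k) (hd : 2 ≤ d) (v : ℕ) : oreLevel k d v ≤ d := by
  unfold oreLevel
  split_ifs with h1 h2
  · omega
  · have h3 : (v - 1) / k ≤ (k * (d - 1)) / k := Nat.div_le_div_right (by omega)
    rw [Nat.mul_div_cancel_left _ (by omega : 0 < k)] at h3
    set q := (v - 1) / k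
    omega
  · exact le_refl d

lemma level_zero_iff (hd : 2 ≤ d) (v : ℕ) : oreLevel k d v = 0 ↔ v = 0 := by
  unfold oreLevel
  split_ifs with h1 h2
  · simp [h1]
  · simp [h1]
  · omega

lemma level_last (hk : 1 ≤ k) (hd : 2 ≤ d) {v : ℕ} (hv : v < k * (d - 1) + 2) :
    oreLevel k d v = d ↔ v = k * (d - 1) + 1 := by
  unfold oreLevel
  split_ifs with h1 h2
  · omega
  · have hlt : (v - 1) / k < d - 1 := by
      rw [Nat.div_lt_iff_lt_mul (by omega : 0 < k), Nat.mul_comm]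
      omega
    set q := (v - 1) / k
    omega
  · omega

lemma level_mid (hk : 1 ≤ k) (hd : 2 ≤ d) {j : ℕ} (hj1 : 1 ≤ j) (hj2 : j ≤ d - 1) (v : ℕ) :
    oreLevel k d v = j ↔ ((j - 1) * k + 1 ≤ v ∧ v ≤ j * k) := by
  have hjk : j * k ≤ k * (d - 1) := by
    rw [Nat.mul_comm]
    exact Nat.mul_le_mul_left k hj2
  have hstep : (j - 1) * k + k = j * k := by
    obtain ⟨i, rfl⟩ : ∃ i, j = i + 1 := ⟨j - 1, by omega⟩
    simp [Nat.succ_mul]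
  unfold oreLevel
  split_ifs with h1 h2
  · omega
  · constructor
    · intro h
      have e : (v - 1) / k = j - 1 := by omega
      have l1 : (j - 1) * k ≤ v - 1 := by
        rw [← e]; exact Nat.div_mul_le_self _ _
      have l2 : v - 1 < j * k := by
        rw [← Nat.div_lt_iff_lt_mul (by omega : 0 < k), e]; omega
      omega
    · rintro ⟨ha, hb⟩
      have e : (v - 1) / k = j - 1 := by
        apply Nat.div_eq_of_lt_le (by omega)
        have : (j - 1 + 1) * k = j * k := by rw [show j - 1 + 1 = j by omega]
        rw [this]; omega
      omega
  · omega

def vtx (k d j : ℕ) : ℕ :=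
  if j = 0 then 0 else if j ≤ d - 1 then (j - 1) * k + 1 else k * (d - 1) + 1

lemma vtx_lt (hk : 1 ≤ k) (hd : 2 ≤ d) (j : ℕ) : vtx k d j < k * (d - 1) + 2 := by
  unfold vtx
  split_ifs with h1 h2
  · omega
  · have h3 : (j - 1) * k ≤ (d - 1) * k := Nat.mul_le_mul_right k (by omega)
    rw [Nat.mul_comm (d - 1) k] at h3
    omega
  · omega

lemma level_vtx (hk : 1 ≤ k) (hd : 2 ≤ d) {j : ℕ} (hj : j ≤ d) :
    oreLevel k d (vtx k d j) = j := by
  unfold vtx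
  split_ifs with h1 h2
  · subst h1; simp [oreLevel]
  · rw [level_mid hk hd (by omega) h2]
    have hstep : (j - 1) * k + k = j * k := by
      obtain ⟨i, rfl⟩ : ∃ i, j = i + 1 := ⟨j - 1, by omega⟩
      simp [Nat.succ_mul]
    omega
  · have hj' : j = d := by omega
    subst hj'
    rw [level_last hk hd (by omega)]

lemma adj_iff (u v : Fin (k * (d - 1) + 2)) :
    (seqJoinT k d).Adj u v ↔ u ≠ v ∧ oreLevel k d u.val ≤ oreLevel k d v.val + 1 ∧
      oreLevel k d v.val ≤ oreLevel k d u.val + 1 := by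
  simp only [seqJoinT, SimpleGraph.fromRel_adj]
  tauto

lemma level_le_of_walk {u v : Fin (k * (d - 1) + 2)} (p : (seqJoinT k d).Walk u v) :
    oreLevel k d v.val ≤ oreLevel k d u.val + p.length ∧
    oreLevel k d u.val ≤ oreLevel k d v.val + p.length := by
  induction p with
  | nil => simp
  | cons h p ih =>
    rw [adj_iff] at h
    obtain ⟨-, h1, h2⟩ := h
    rw [SimpleGraph.Walk.length_cons]
    omega

lemma exists_walk (hk : 1 ≤ k) (hd : 2 ≤ d) :
    ∀ m (u v : Fin (k * (d - 1) + 2)), u ≠ v →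
      oreLevel k d v.val = oreLevel k d u.val + m →
      ∃ p : (seqJoinT k d).Walk u v, p.length ≤ max m 1 := by
  intro m
  induction m with
  | zero =>
    intro u v hne h
    exact ⟨SimpleGraph.Walk.cons ((adj_iff u v).2 ⟨hne, by omega, by omega⟩)
      SimpleGraph.Walk.nil, by simp⟩
  | succ m ih =>
    intro u v hne h
    rcases Nat.eq_zero_or_pos m with rfl | hm
    · exact ⟨SimpleGraph.Walk.cons ((adj_iff u v).2 ⟨hne, by omega, by omega⟩)
        SimpleGraph.Walk.nil, by simp⟩
    · have hvd := level_le hk hd v.val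
      set w : Fin (k * (d - 1) + 2) := ⟨vtx k d (oreLevel k d u.val + 1), vtx_lt hk hd _⟩ with hw
      have hlw : oreLevel k d w.val = oreLevel k d u.val + 1 :=
        level_vtx (j := oreLevel k d u.val + 1) hk hd (by omega)
      have hwv : w ≠ v := by
        intro he; rw [he] at hlw; omega
      obtain ⟨p, hp⟩ := ih w v hwv (by omega)
      have hadj : (seqJoinT k d).Adj u w := (adj_iff u w).2
        ⟨by intro he; rw [← he] at hlw; omega, by omega, by omega⟩
      exact ⟨SimpleGraph.Walk.cons hadj p, by rw [SimpleGraph.Walk.length_cons]; omega⟩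

lemma walk_le_d (hk : 1 ≤ k) (hd : 2 ≤ d) (u v : Fin (k * (d - 1) + 2)) (hne : u ≠ v) :
    ∃ p : (seqJoinT k d).Walk u v, p.length ≤ d := by
  have h1 := level_le hk hd u.val
  have h2 := level_le hk hd v.val
  rcases le_total (oreLevel k d u.val) (oreLevel k d v.val) with h | h
  · obtain ⟨p, hp⟩ := exists_walk hk hd (oreLevel k d v.val - oreLevel k d u.val) u v hne
      (by omega)
    exact ⟨p, by omega⟩
  · obtain ⟨p, hp⟩ := exists_walk hk hd (oreLevel k d u.val - oreLevel k d v.val) v u hne.symm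
      (by omega)
    refine ⟨p.reverse, ?_⟩
    rw [SimpleGraph.Walk.length_reverse]
    omega

lemma dist_le_d (hk : 1 ≤ k) (hd : 2 ≤ d) (u v : Fin (k * (d - 1) + 2)) :
    (seqJoinT k d).dist u v ≤ d := by
  rcases eq_or_ne u v with rfl | hne
  · rw [SimpleGraph.dist_self]; omega
  · obtain ⟨p, hp⟩ := walk_le_d hk hd u v hne
    exact le_trans (SimpleGraph.dist_le p) hp

lemma dist_ends (hk : 1 ≤ k) (hd : 2 ≤ d) (h0 : (0 : ℕ) < k * (d - 1) + 2)
    (h1 : k * (d - 1) + 1 < k * (d - 1) + 2) :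
    (seqJoinT k d).dist ⟨0, h0⟩ ⟨k * (d - 1) + 1, h1⟩ = d := by
  set a : Fin (k * (d - 1) + 2) := ⟨0, h0⟩ with ha
  set b : Fin (k * (d - 1) + 2) := ⟨k * (d - 1) + 1, h1⟩ with hb
  have hla : oreLevel k d a.val = 0 := by simp [ha, oreLevel]
  have hlb : oreLevel k d b.val = d := (level_last hk hd (by omega)).2 rfl
  have hne : a ≠ b := by
    intro h
    have h2 : (0 : ℕ) = k * (d - 1) + 1 := congrArg Fin.val h
    omega
  obtain ⟨p, hp⟩ := exists_walk hk hd d a b hne (by omega)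
  have hub := SimpleGraph.dist_le p
  obtain ⟨q, hq⟩ := SimpleGraph.Reachable.exists_walk_length_eq_dist ⟨p⟩
  have hlow := (level_le_of_walk q).1
  rw [hq] at hlow
  omega

lemma diam_eq (hk : 1 ≤ k) (hd : 2 ≤ d) : (seqJoinT k d).diam = d := by
  have hediam : (seqJoinT k d).ediam ≤ (d : ℕ∞) := by
    apply SimpleGraph.ediam_le_of_edist_le
    intro u v
    rcases eq_or_ne u v with rfl | hne
    · simp [SimpleGraph.edist_self]
    · obtain ⟨p, hp⟩ := walk_le_d hk hd u v hne
      exact le_trans (SimpleGraph.edist_le p) (by exact_mod_cast hp)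
  have hne_top : (seqJoinT k d).ediam ≠ ⊤ :=
    ne_top_of_le_ne_top (ENat.coe_ne_top d) hediam
  have hle : (seqJoinT k d).diam ≤ d := by
    have := ENat.toNat_le_toNat hediam (ENat.coe_ne_top d)
    simpa [SimpleGraph.diam] using this
  have hge : d ≤ (seqJoinT k d).diam := by
    have h := SimpleGraph.dist_le_diam (G := seqJoinT k d) hne_top
      (u := ⟨0, by omega⟩) (v := ⟨k * (d - 1) + 1, by omega⟩)
    rw [dist_ends hk hd (by omega) (by omega)] at h
    exact h
  omega
lemma card_filter_val (n a b : ℕ) (hb : b < n) :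
    ((Finset.univ : Finset (Fin n)).filter fun v => a ≤ v.val ∧ v.val ≤ b).card = b + 1 - a := by
  have himg : (((Finset.univ : Finset (Fin n)).filter fun v => a ≤ v.val ∧ v.val ≤ b).image
      Fin.val) = Finset.Icc a b := by
    ext m
    simp only [Finset.mem_image, Finset.mem_filter, Finset.mem_univ, true_and, Finset.mem_Icc]
    constructor
    · rintro ⟨v, ⟨h1, h2⟩, rfl⟩; exact ⟨h1, h2⟩
    · rintro ⟨h1, h2⟩; exact ⟨⟨m, by omega⟩, ⟨h1, h2⟩, rfl⟩
  rw [← Nat.card_Icc, ← himg, Finset.card_image_of_injective _ Fin.val_injective]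

def levCard (k d j : ℕ) : ℕ :=
  ((Finset.univ : Finset (Fin (k * (d - 1) + 2))).filter fun v => oreLevel k d v.val = j).card

lemma levCard_zero (hd : 2 ≤ d) : levCard k d 0 = 1 := by
  have h : ((Finset.univ : Finset (Fin (k * (d - 1) + 2))).filter
      fun v => oreLevel k d v.val = 0) = {⟨0, by omega⟩} := by
    ext v
    simp only [Finset.mem_filter, Finset.mem_univ, true_and, Finset.mem_singleton,
      level_zero_iff hd, Fin.ext_iff]
  rw [levCard, h, Finset.card_singleton]

lemma levCard_last (hk : 1 ≤ k) (hd : 2 ≤ d) : levCard k d d = 1 := by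
  have h : ((Finset.univ : Finset (Fin (k * (d - 1) + 2))).filter
      fun v => oreLevel k d v.val = d) = {⟨k * (d - 1) + 1, by omega⟩} := by
    ext v
    simp [level_last hk hd v.isLt, Fin.ext_iff]
  rw [levCard, h, Finset.card_singleton]

lemma levCard_mid (hk : 1 ≤ k) (hd : 2 ≤ d) {j : ℕ} (hj1 : 1 ≤ j) (hj2 : j ≤ d - 1) :
    levCard k d j = k := by
  have hjk : j * k ≤ k * (d - 1) := by
    rw [Nat.mul_comm]; exact Nat.mul_le_mul_left k hj2
  have hstep : (j - 1) * k + k = j * k := by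
    obtain ⟨i, rfl⟩ : ∃ i, j = i + 1 := ⟨j - 1, by omega⟩
    simp [Nat.succ_mul]
  have h : ((Finset.univ : Finset (Fin (k * (d - 1) + 2))).filter
      fun v => oreLevel k d v.val = j) =
      ((Finset.univ : Finset (Fin (k * (d - 1) + 2))).filter
      fun v => (j - 1) * k + 1 ≤ v.val ∧ v.val ≤ j * k) := by
    ext v
    simp [level_mid hk hd hj1 hj2]
  rw [levCard, h, card_filter_val _ _ _ (by omega)]
  omega

lemma levCard_gt (hk : 1 ≤ k) (hd : 2 ≤ d) {j : ℕ} (hj : d < j) : levCard k d j = 0 := by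
  rw [levCard, Finset.card_eq_zero]
  ext v
  simp only [Finset.mem_filter, Finset.mem_univ, true_and, Finset.notMem_empty, iff_false]
  have := level_le hk hd v.val
  omega

def degF (k d j : ℕ) : ℕ :=
  (if j = 0 then 0 else levCard k d (j - 1)) + levCard k d j + levCard k d (j + 1) - 1

lemma degree_eq (hk : 1 ≤ k) (hd : 2 ≤ d) [DecidableRel (seqJoinT k d).Adj]
    (v : Fin (k * (d - 1) + 2)) :
    (seqJoinT k d).degree v = degF k d (oreLevel k d v.val) := by
  set j := oreLevel k d v.val with hj
  have hfil : ((Finset.univ : Finset (Fin (k * (d - 1) + 2))).filter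
      fun w => (seqJoinT k d).Adj v w) =
      ((Finset.univ : Finset (Fin (k * (d - 1) + 2))).filter
        fun w => oreLevel k d w.val + 1 = j ∨ (oreLevel k d w.val = j ∨
          oreLevel k d w.val = j + 1)).erase v := by
    ext w
    simp only [Finset.mem_filter, Finset.mem_univ, true_and, Finset.mem_erase, adj_iff]
    constructor
    · rintro ⟨hne, h1, h2⟩
      exact ⟨hne.symm, by omega⟩
    · rintro ⟨hne, h⟩
      exact ⟨hne.symm, by omega, by omega⟩
  rw [← SimpleGraph.card_neighborFinset_eq_degree, SimpleGraph.neighborFinset_eq_filter, hfil,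
    Finset.card_erase_of_mem (by simp [hj]), Finset.filter_or, Finset.filter_or,
    Finset.card_union_of_disjoint (by
      rw [Finset.disjoint_left]
      intro x hx hx'
      simp only [Finset.mem_union, Finset.mem_filter, Finset.mem_univ, true_and] at hx hx'
      omega),
    Finset.card_union_of_disjoint (by
      rw [Finset.disjoint_left]
      intro x hx hx'
      simp only [Finset.mem_filter, Finset.mem_univ, true_and] at hx hx'
      omega)]
  have hA : ((Finset.univ : Finset (Fin (k * (d - 1) + 2))).filter
      fun w => oreLevel k d w.val + 1 = j).card = if j = 0 then 0 else levCard k d (j - 1) := by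
    split_ifs with h0
    · rw [Finset.card_eq_zero]
      ext w
      simp only [Finset.mem_filter, Finset.mem_univ, true_and, Finset.notMem_empty, iff_false]
      omega
    · rw [levCard]
      congr 1
      ext w
      simp only [Finset.mem_filter, Finset.mem_univ, true_and]
      omega
  rw [hA, degF]
  rw [show (Finset.filter (fun w : Fin (k * (d - 1) + 2) => oreLevel k d w.val = j)
    Finset.univ).card = levCard k d j from rfl,
    show (Finset.filter (fun w : Fin (k * (d - 1) + 2) => oreLevel k d w.val = j + 1)
    Finset.univ).card = levCard k d (j + 1) from rfl]
  omega
lemma sum_deg (hk : 1 ≤ k) (hd : 2 ≤ d) [DecidableRel (seqJoinT k d).Adj] :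
    ∑ v, (seqJoinT k d).degree v = ∑ j ∈ Finset.range (d + 1), levCard k d j * degF k d j := by
  rw [← Finset.sum_fiberwise_of_maps_to (g := fun v : Fin (k * (d - 1) + 2) => oreLevel k d v.val)
    (t := Finset.range (d + 1))
    (fun v _ => Finset.mem_range.2 (Nat.lt_succ_of_le (level_le hk hd v.val)))]
  apply Finset.sum_congr rfl
  intro j _
  calc ∑ v ∈ Finset.univ.filter (fun v : Fin (k * (d - 1) + 2) => oreLevel k d v.val = j),
        (seqJoinT k d).degree v
      = ∑ _v ∈ Finset.univ.filter (fun v : Fin (k * (d - 1) + 2) => oreLevel k d v.val = j),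
        degF k d j := by
        apply Finset.sum_congr rfl
        intro v hv
        rw [degree_eq hk hd v, (Finset.mem_filter.1 hv).2]
    _ = levCard k d j * degF k d j := by
        rw [Finset.sum_const, smul_eq_mul, levCard]

lemma sum_levdeg (hk : 1 ≤ k) (hd : 2 ≤ d) :
    ∑ j ∈ Finset.range (d + 1), levCard k d j * degF k d j + d * k
      = (3 * d - 5) * k ^ 2 + 5 * k := by
  obtain ⟨k', rfl⟩ : ∃ k', k = k' + 1 := ⟨k - 1, by omega⟩
  obtain ⟨e, rfl⟩ : ∃ e, d = e + 2 := ⟨d - 2, by omega⟩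
  have h0 : levCard (k' + 1) (e + 2) 0 = 1 := levCard_zero hd
  have hlast : levCard (k' + 1) (e + 2) (e + 2) = 1 := levCard_last hk hd
  have hgt : levCard (k' + 1) (e + 2) (e + 3) = 0 := levCard_gt hk hd (by omega)
  have hmid : ∀ j, 1 ≤ j → j ≤ e + 1 → levCard (k' + 1) (e + 2) j = k' + 1 :=
    fun j h1 h2 => levCard_mid hk hd h1 (by omega)
  have hd0 : degF (k' + 1) (e + 2) 0 = k' + 1 := by
    rw [degF, if_pos rfl, h0, hmid 1 le_rfl (by omega)]
    omega
  have hdlast : degF (k' + 1) (e + 2) (e + 2) = k' + 1 := by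
    rw [degF, if_neg (by omega), show e + 2 - 1 = e + 1 from rfl, hlast, hgt,
      hmid (e + 1) (by omega) le_rfl]
    omega
  rw [show e + 2 + 1 = e + 1 + 1 + 1 from rfl, Finset.sum_range_succ, Finset.sum_range_succ']
  rw [hlast, hdlast, h0, hd0]
  have hmidsum : ∑ x ∈ Finset.range (e + 1),
      levCard (k' + 1) (e + 2) (x + 1) * degF (k' + 1) (e + 2) (x + 1)
      = ∑ x ∈ Finset.range (e + 1),
      (k' + 1) * (levCard (k' + 1) (e + 2) x + levCard (k' + 1) (e + 2) (x + 2) + k') := by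
    apply Finset.sum_congr rfl
    intro x hx
    rw [Finset.mem_range] at hx
    have h1 : levCard (k' + 1) (e + 2) (x + 1) = k' + 1 := hmid (x + 1) (by omega) (by omega)
    have h2 : degF (k' + 1) (e + 2) (x + 1)
        = levCard (k' + 1) (e + 2) x + (k' + 1) + levCard (k' + 1) (e + 2) (x + 2) - 1 := by
      rw [degF, if_neg (by omega), show x + 1 - 1 = x from rfl, h1]
    rw [h1, h2]
    congr 1
    omega
  rw [hmidsum, ← Finset.mul_sum, Finset.sum_add_distrib, Finset.sum_add_distrib,
    Finset.sum_const, Finset.card_range, smul_eq_mul]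
  have hsumA : ∑ x ∈ Finset.range (e + 1), levCard (k' + 1) (e + 2) x = e * (k' + 1) + 1 := by
    rw [Finset.sum_range_succ', h0]
    rw [Finset.sum_congr rfl (fun x hx => hmid (x + 1) (by omega)
      (by rw [Finset.mem_range] at hx; omega)), Finset.sum_const, Finset.card_range, smul_eq_mul]
  have hsumB : ∑ x ∈ Finset.range (e + 1), levCard (k' + 1) (e + 2) (x + 2)
      = e * (k' + 1) + 1 := by
    rw [Finset.sum_range_succ, hlast]
    rw [Finset.sum_congr rfl (fun x hx => hmid (x + 2) (by omega)
      (by rw [Finset.mem_range] at hx; omega)), Finset.sum_const, Finset.card_range, smul_eq_mul]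
  rw [hsumA, hsumB, show 3 * (e + 2) - 5 = 3 * e + 1 by omega]
  ring

lemma edge_count (hk : 1 ≤ k) (hd : 2 ≤ d) :
    ((seqJoinT k d).edgeSet.ncard : ℤ) =
      ((3 * (d : ℤ) - 5) * (k : ℤ) ^ 2 + (5 - (d : ℤ)) * (k : ℤ)) / 2 := by
  classical
  have h2E := SimpleGraph.sum_degrees_eq_twice_card_edges (seqJoinT k d)
  rw [sum_deg hk hd] at h2E
  have hS := sum_levdeg hk hd
  have hcard : ((seqJoinT k d).edgeSet.ncard : ℤ) = ((seqJoinT k d).edgeFinset.card : ℤ) := by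
    rw [← SimpleGraph.coe_edgeFinset, Set.ncard_coe_finset]
  have key : (3 * (d : ℤ) - 5) * (k : ℤ) ^ 2 + (5 - (d : ℤ)) * (k : ℤ)
      = 2 * ((seqJoinT k d).edgeSet.ncard : ℤ) := by
    have hc := congrArg (Nat.cast : ℕ → ℤ) hS
    push_cast [Nat.cast_sub (by omega : 5 ≤ 3 * d)] at hc
    have h2E' := congrArg (Nat.cast : ℕ → ℤ) h2E
    push_cast at h2E'
    rw [hcard]
    linarith
  rw [key, Int.mul_ediv_cancel_left _ two_ne_zero]
lemma connected_del (hk : 1 ≤ k) (hd : 2 ≤ d) (S : Set (Fin (k * (d - 1) + 2)))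
    (hS : S.ncard < k) : ((seqJoinT k d).induce Sᶜ).Connected := by
  classical
  have surv0 : ∀ j : ℕ, 1 ≤ j → j ≤ d - 1 →
      ∃ v : Fin (k * (d - 1) + 2), oreLevel k d v.val = j ∧ v ∉ S := by
    intro j h1 h2
    by_contra h
    push_neg at h
    have hsub : (Finset.univ.filter fun v : Fin (k * (d - 1) + 2) => oreLevel k d v.val = j)
        ⊆ S.toFinset := by
      intro v hv
      rw [Finset.mem_filter] at hv
      exact Set.mem_toFinset.2 (h v hv.2)
    have hc := Finset.card_le_card hsub
    rw [show (Finset.univ.filter fun v : Fin (k * (d - 1) + 2) =>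
        oreLevel k d v.val = j).card = levCard k d j from rfl, levCard_mid hk hd h1 h2] at hc
    rw [Set.ncard_eq_toFinset_card'] at hS
    omega
  have surv : ∀ j : ℕ, ∃ v : Fin (k * (d - 1) + 2), v ∉ S ∧ (1 ≤ j → j ≤ d - 1 →
      oreLevel k d v.val = j) := by
    intro j
    by_cases hj : 1 ≤ j ∧ j ≤ d - 1
    · obtain ⟨v, hv1, hv2⟩ := surv0 j hj.1 hj.2
      exact ⟨v, hv2, fun _ _ => hv1⟩
    · obtain ⟨v, hv1, hv2⟩ := surv0 1 le_rfl (by omega)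
      exact ⟨v, hv2, fun h1 h2 => absurd ⟨h1, h2⟩ hj⟩
  choose f hf using surv
  have hmem : ∀ j, f j ∈ Sᶜ := fun j => Set.mem_compl ((hf j).1)
  have hlev : ∀ j, 1 ≤ j → j ≤ d - 1 → oreLevel k d (f j).val = j :=
    fun j h1 h2 => (hf j).2 h1 h2
  have hmem1 : f 1 ∈ Sᶜ := hmem 1
  -- adjacency in the induced graph
  have iadj : ∀ (a b : ↥(Sᶜ)), (seqJoinT k d).Adj a.1 b.1 →
      ((seqJoinT k d).induce Sᶜ).Adj a b := by
    intro a b hab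
    exact hab
  have hstep : ∀ j, 1 ≤ j → j ≤ d - 1 →
      ((seqJoinT k d).induce Sᶜ).Reachable
        ⟨f j, hmem j⟩ ⟨f 1, hmem1⟩ := by
    intro j h1
    induction j, h1 using Nat.le_induction with
    | base => intro _; exact SimpleGraph.Reachable.refl _
    | succ j hj ih =>
      intro h2
      have hj2 : j ≤ d - 1 := by omega
      refine SimpleGraph.Reachable.trans ?_ (ih hj2)
      apply SimpleGraph.Adj.reachable
      apply iadj
      show (seqJoinT k d).Adj (f (j + 1)) (f j)
      rw [adj_iff]
      have l1 := hlev j (by omega) hj2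
      have l2 := hlev (j + 1) (by omega) h2
      refine ⟨?_, by omega, by omega⟩
      intro he
      rw [he] at l2
      omega
  have hmain : ∀ (v : Fin (k * (d - 1) + 2)) (hv : v ∈ Sᶜ),
      ((seqJoinT k d).induce Sᶜ).Reachable ⟨v, hv⟩ ⟨f 1, hmem1⟩ := by
    intro v hv
    have hld := level_le hk hd v.val
    set j := oreLevel k d v.val with hjdef
    rcases Nat.eq_zero_or_pos j with hj0 | hjpos
    · -- level 0 : adjacent to f 1
      apply SimpleGraph.Adj.reachable
      apply iadj
      show (seqJoinT k d).Adj v (f 1)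
      rw [adj_iff]
      have l1 := hlev 1 le_rfl (by omega)
      refine ⟨?_, by omega, by omega⟩
      intro he
      rw [he] at hjdef
      omega
    · by_cases hjd : j ≤ d - 1
      · -- middle level
        by_cases hvf : v = f j
        · have he : (⟨v, hv⟩ : ↥(Sᶜ)) = ⟨f j, hmem j⟩ := Subtype.ext hvf
          rw [he]
          exact hstep j hjpos hjd
        · refine SimpleGraph.Reachable.trans ?_ (hstep j hjpos hjd)
          apply SimpleGraph.Adj.reachable
          apply iadj
          show (seqJoinT k d).Adj v (f j)
          rw [adj_iff]
          have l1 := hlev j hjpos hjd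
          exact ⟨hvf, by omega, by omega⟩
      · -- level d
        have hjd' : j = d := by omega
        refine SimpleGraph.Reachable.trans ?_ (hstep (d - 1) (by omega) le_rfl)
        apply SimpleGraph.Adj.reachable
        apply iadj
        show (seqJoinT k d).Adj v (f (d - 1))
        rw [adj_iff]
        have l1 := hlev (d - 1) (by omega) le_rfl
        refine ⟨?_, by omega, by omega⟩
        intro he
        rw [he] at hjdef
        omega
  rw [SimpleGraph.connected_iff]
  refine ⟨?_, ⟨⟨f 1, hmem1⟩⟩⟩
  rintro ⟨x, hx⟩ ⟨y, hy⟩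
  exact (hmain x hx).trans (hmain y hy).symm
end SeqJoinTAux


/-- For `k ≥ 1` and `d ≥ 2`, the sequential join `T = K₁ ∨ K_k ∨ ⋯ ∨ K_k ∨ K₁` (with `d-1`
middle copies of `K_k`) is a `k`-connected graph of order `kd - k + 2` and diameter `d`
with `((3d-5)k² + (5-d)k)/2` edges, and the distance between the vertex of `T₁` and the
vertex of `T_{d+1}` equals `d`. -/
theorem seqJoinT_properties (k d : ℕ) (hk : 1 ≤ k) (hd : 2 ≤ d) :
    (seqJoinT k d).KConnected k ∧
    Fintype.card (Fin (k * (d - 1) + 2)) = k * d - k + 2 ∧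
    (seqJoinT k d).diam = d ∧
    ((seqJoinT k d).edgeSet.ncard : ℤ) =
      ((3 * (d : ℤ) - 5) * (k : ℤ) ^ 2 + (5 - (d : ℤ)) * (k : ℤ)) / 2 ∧
    (seqJoinT k d).dist ⟨0, Nat.succ_pos _⟩ ⟨k * (d - 1) + 1, Nat.lt_succ_self _⟩ = d := by
  refine ⟨⟨?_, fun S hS => SeqJoinTAux.connected_del hk hd S hS⟩, ?_,
    SeqJoinTAux.diam_eq hk hd, SeqJoinTAux.edge_count hk hd,
    SeqJoinTAux.dist_ends hk hd _ _⟩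
  · rw [Fintype.card_fin]
    have h := Nat.mul_le_mul_left k (show 1 ≤ d - 1 by omega)
    omega
  · rw [Fintype.card_fin]
    obtain ⟨e, rfl⟩ : ∃ e, d = e + 2 := ⟨d - 2, by omega⟩
    have h : k * (e + 2) = k * (e + 2 - 1) + k := by
      rw [show e + 2 - 1 = e + 1 from rfl]
      ring
    omega
end

section
/- Let d ≥ 4 and n ≥ d+1 be integers. Then the maximum number of edges of a simple connected graph of order n and diameter d equals d + C(n-d-1, 2) + 3(n-d-1), where C(m,2) = m(m-1)/2 denotes the binomial coefficient. -/
open Finset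

lemma card_sym2_nondiag {α : Type*} [DecidableEq α] (s : Finset α) :
    (s.sym2.filter fun e => ¬ e.IsDiag).card = s.card * (s.card - 1) / 2 := by
  have h1 : (s.sym2.filter fun e => e.IsDiag) = s.image Sym2.diag := by
    ext e
    induction e using Sym2.ind with
    | _ x y =>
      simp only [mem_filter, mk_mem_sym2_iff, Sym2.mk_isDiag_iff, mem_image]
      constructor
      · rintro ⟨⟨hx, hy⟩, rfl⟩; exact ⟨x, hx, rfl⟩
      · rintro ⟨a, ha, h⟩
        rw [Sym2.diag, Sym2.eq_iff] at h
        rcases h with ⟨rfl, rfl⟩ | ⟨rfl, rfl⟩ <;> exact ⟨⟨ha, ha⟩, rfl⟩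
  have h2 : (s.sym2.filter fun e => e.IsDiag).card = s.card := by
    rw [h1, Finset.card_image_of_injective _ Sym2.diag_injective]
  have h3 := Finset.card_filter_add_card_filter_not
    (s := s.sym2) (p := fun e => e.IsDiag)
  rw [Finset.card_sym2] at h3
  have h4 : (s.card + 1).choose 2 = s.card + s.card.choose 2 := by
    rw [Nat.choose_succ_succ, Nat.choose_one_right]
  have h5 : s.card.choose 2 = s.card * (s.card - 1) / 2 := Nat.choose_two_right _
  omega

lemma upper_bound (d n : ℕ) (hd : 1 ≤ d) (hn : d + 1 ≤ n) (V : Type) [Fintype V]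
    (G : SimpleGraph V) (hc : G.Connected) (hcard : Fintype.card V = n) (hdiam : G.diam = d) :
    G.edgeSet.ncard ≤ d + (n - d - 1) * (n - d - 1 - 1) / 2 + 3 * (n - d - 1) := by
  classical
  have hne : Nonempty V := by
    rw [← Fintype.card_pos_iff, hcard]; omega
  obtain ⟨u, v, huv⟩ := G.exists_dist_eq_diam (α := V)
  rw [hdiam] at huv
  obtain ⟨p, hp⟩ := hc.exists_walk_length_eq_dist u v
  rw [huv] at hp
  set f : ℕ → V := p.getVert with hf
  -- dist u (f i) ≤ i
  have hub : ∀ i, i ≤ d → G.dist u (f i) ≤ i := by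
    intro i hi
    induction i with
    | zero => simp [hf, p.getVert_zero]
    | succ k ih =>
      have h1 : G.Adj (f k) (f (k + 1)) := p.adj_getVert_succ (by omega)
      calc G.dist u (f (k+1)) ≤ G.dist u (f k) + G.dist (f k) (f (k+1)) := hc.dist_triangle
        _ ≤ k + 1 := by
            have := (G.dist_eq_one_iff_adj).mpr h1
            have := ih (by omega); omega
  -- dist (f i) v ≤ d - i
  have hvb : ∀ i, i ≤ d → G.dist (f i) v ≤ d - i := by
    intro i hi
    have key : ∀ j, j ≤ d → G.dist (f (d - j)) v ≤ j := by
      intro j hj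
      induction j with
      | zero => simp [hf, Nat.sub_zero, ← hp, p.getVert_length]
      | succ k ih =>
        have h1 : G.Adj (f (d - (k+1))) (f (d - k)) := by
          have : d - (k+1) + 1 = d - k := by omega
          have h2 := p.adj_getVert_succ (i := d - (k+1)) (by omega)
          rwa [this] at h2
        calc G.dist (f (d - (k+1))) v
            ≤ G.dist (f (d-(k+1))) (f (d-k)) + G.dist (f (d-k)) v := hc.dist_triangle
          _ ≤ k + 1 := by
              have := (G.dist_eq_one_iff_adj).mpr h1
              have := ih (by omega); omega
    have := key (d - i) (by omega)
    have h2 : d - (d - i) = i := by omega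
    rwa [h2] at this
  -- dist u (f i) = i
  have hdist : ∀ i, i ≤ d → G.dist u (f i) = i := by
    intro i hi
    have h1 := hub i hi
    have h2 := hvb i hi
    have h3 : G.dist u v ≤ G.dist u (f i) + G.dist (f i) v := hc.dist_triangle
    omega
  -- window inequality
  have hwin : ∀ i j, i ≤ d → j ≤ d → j - i ≤ G.dist (f i) (f j) := by
    intro i j hi hj
    have h1 : G.dist u (f j) ≤ G.dist u (f i) + G.dist (f i) (f j) := hc.dist_triangle
    rw [hdist i hi, hdist j hj] at h1
    omega
  have hinj : ∀ i j, i ≤ d → j ≤ d → f i = f j → i = j := by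
    intro i j hi hj hfe
    have := hdist i hi
    rw [hfe, hdist j hj] at this
    omega
  -- the path vertex set
  set S : Finset V := (Finset.range (d+1)).image f with hS
  have hScard : S.card = d + 1 := by
    rw [hS, Finset.card_image_of_injOn, Finset.card_range]
    intro i hi j hj hij
    exact hinj i j (by simpa using Nat.lt_succ_iff.mp (Finset.mem_range.mp hi))
      (by simpa using Nat.lt_succ_iff.mp (Finset.mem_range.mp hj)) hij
  have hmemS : ∀ x, x ∈ S ↔ ∃ i, i ≤ d ∧ f i = x := by
    intro x
    simp only [hS, Finset.mem_image, Finset.mem_range, Nat.lt_succ_iff]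
  set T : Finset V := Finset.univ \ S with hT
  have hTcard : T.card = n - d - 1 := by
    rw [hT, Finset.card_sdiff_of_subset (Finset.subset_univ S), Finset.card_univ, hcard, hScard]
    omega
  -- edge finset
  have hE : G.edgeSet.ncard = G.edgeSet.toFinset.card := G.edgeSet.ncard_eq_toFinset_card'
  set E : Finset (Sym2 V) := G.edgeSet.toFinset with hEdef
  have hmemE : ∀ x y : V, s(x, y) ∈ E ↔ G.Adj x y := by
    intro x y; simp [hEdef]
  set A : Finset (Sym2 V) := E.filter (fun e => ∀ x ∈ e, x ∈ S) with hA
  set B : Finset (Sym2 V) := E.filter (fun e => ∀ x ∈ e, x ∉ S) with hB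
  set C : Finset (Sym2 V) := E.filter
    (fun e => ¬ (∀ x ∈ e, x ∈ S) ∧ ¬ (∀ x ∈ e, x ∉ S)) with hC
  have hsplit : E ⊆ A ∪ B ∪ C := by
    intro e he
    simp only [hA, hB, hC, Finset.mem_union, Finset.mem_filter]
    by_cases h1 : ∀ x ∈ e, x ∈ S
    · exact Or.inl (Or.inl ⟨he, h1⟩)
    by_cases h2 : ∀ x ∈ e, x ∉ S
    · exact Or.inl (Or.inr ⟨he, h2⟩)
    exact Or.inr ⟨he, h1, h2⟩
  have hcards : E.card ≤ A.card + B.card + C.card := by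
    calc E.card ≤ (A ∪ B ∪ C).card := Finset.card_le_card hsplit
      _ ≤ (A ∪ B).card + C.card := Finset.card_union_le _ _
      _ ≤ A.card + B.card + C.card := by
          have := Finset.card_union_le A B; omega
  -- bound on A
  set g : Sym2 V → ℕ := Sym2.lift ⟨fun a b => min (G.dist u a) (G.dist u b),
    fun a b => by simp [min_comm]⟩ with hg
  have hAstruct : ∀ e ∈ A, e = s(f (g e), f (g e + 1)) ∧ g e < d := by
    intro e he
    induction e using Sym2.ind with
    | _ x y =>
      rw [hA, Finset.mem_filter] at he
      obtain ⟨heE, hin⟩ := he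
      have hadj : G.Adj x y := by rw [← hmemE]; exact heE
      obtain ⟨i, hi, rfl⟩ := (hmemS x).mp (hin x (Sym2.mem_mk_left x y))
      obtain ⟨j, hj, rfl⟩ := (hmemS _).mp (hin y (Sym2.mem_mk_right _ y))
      have hne : i ≠ j := fun h => G.irrefl (h ▸ hadj)
      have hd1 : G.dist (f i) (f j) = 1 := SimpleGraph.dist_eq_one_iff_adj.mpr hadj
      have hw1 := hwin i j hi hj
      have hw2 := hwin j i hj hi
      rw [hd1] at hw1
      rw [SimpleGraph.dist_comm, hd1] at hw2
      have hge : g s(f i, f j) = min i j := by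
        show min (G.dist u (f i)) (G.dist u (f j)) = min i j
        rw [hdist i hi, hdist j hj]
      rcases Nat.lt_or_ge i j with hlt | hge2
      · have hj1 : j = i + 1 := by omega
        subst hj1
        rw [hge, min_eq_left (by omega)]
        exact ⟨rfl, by omega⟩
      · have hi1 : i = j + 1 := by omega
        subst hi1
        rw [hge, min_eq_right (by omega)]
        exact ⟨Sym2.eq_swap, by omega⟩
  have hAcard : A.card ≤ d := by
    have := Finset.card_le_card_of_injOn g
      (fun e he => Finset.mem_range.mpr (hAstruct e he).2)
      (fun e he e' he' hgg => by
        rw [(hAstruct e he).1, (hAstruct e' he').1, hgg])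
    simpa using this
  -- bound on B
  have hBcard : B.card ≤ (n - d - 1) * (n - d - 1 - 1) / 2 := by
    have hsub : B ⊆ T.sym2.filter (fun e => ¬ e.IsDiag) := by
      intro e he
      induction e using Sym2.ind with
      | _ x y =>
        rw [hB, Finset.mem_filter] at he
        obtain ⟨heE, hout⟩ := he
        have hadj : G.Adj x y := by rw [← hmemE]; exact heE
        rw [Finset.mem_filter, Finset.mk_mem_sym2_iff, Sym2.mk_isDiag_iff]
        refine ⟨⟨?_, ?_⟩, hadj.ne⟩
        · rw [hT, Finset.mem_sdiff]
          exact ⟨Finset.mem_univ x, hout x (Sym2.mem_mk_left x y)⟩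
        · rw [hT, Finset.mem_sdiff]
          exact ⟨Finset.mem_univ y, hout y (Sym2.mem_mk_right x y)⟩
    calc B.card ≤ (T.sym2.filter (fun e => ¬ e.IsDiag)).card := Finset.card_le_card hsub
      _ = (n - d - 1) * (n - d - 1 - 1) / 2 := by rw [card_sym2_nondiag, hTcard]
  -- bound on C
  have hCcard : C.card ≤ 3 * (n - d - 1) := by
    have pert : ∀ t ∈ T, (C.filter (fun e => t ∈ e)).card ≤ 3 := by
      intro t ht
      have htS : t ∉ S := by rw [hT, Finset.mem_sdiff] at ht; exact ht.2
      set ψ : Sym2 V → ℕ := fun e =>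
        Sym2.lift ⟨fun a b => G.dist u a + G.dist u b, fun a b => by ring⟩ e - G.dist u t
        with hψ
      have struct : ∀ e ∈ C.filter (fun e => t ∈ e),
          e = s(t, f (ψ e)) ∧ ψ e ≤ d ∧ G.Adj t (f (ψ e)) := by
        intro e he
        rw [Finset.mem_filter, hC, Finset.mem_filter] at he
        obtain ⟨⟨heE, h1, h2⟩, hte⟩ := he
        push_neg at h2
        obtain ⟨z, hze, hzS⟩ := h2
        induction e using Sym2.ind with
        | _ x y =>
          have hadj : G.Adj x y := by rw [← hmemE]; exact heE
          have hψval : ∀ w : V, ψ s(t, w) = G.dist u w := by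
            intro w
            show G.dist u t + G.dist u w - G.dist u t = G.dist u w
            omega
          rcases Sym2.mem_iff.mp hte with rfl | rfl
          · -- t = x
            have hyS : z = y := by
              rcases Sym2.mem_iff.mp hze with rfl | rfl
              · exact absurd hzS htS
              · rfl
            subst hyS
            obtain ⟨j, hj, rfl⟩ := (hmemS z).mp hzS
            rw [hψval, hdist j hj]
            exact ⟨rfl, hj, hadj⟩
          · -- t = y
            have hxS : z = x := by
              rcases Sym2.mem_iff.mp hze with rfl | rfl
              · rfl
              · exact absurd hzS htS
            subst hxS
            obtain ⟨j, hj, rfl⟩ := (hmemS z).mp hzS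
            rw [Sym2.eq_swap, hψval, hdist j hj]
            exact ⟨rfl, hj, hadj.symm⟩
      have hinjψ : Set.InjOn ψ (C.filter (fun e => t ∈ e)) := by
        intro e he e' he' hee
        rw [(struct e he).1, (struct e' he').1, hee]
      rw [← Finset.card_image_of_injOn hinjψ]
      set I : Finset ℕ := (C.filter (fun e => t ∈ e)).image ψ with hI
      rcases I.eq_empty_or_nonempty with hIe | hIne
      · rw [hIe]; simp
      · have hwin2 : ∀ i ∈ I, ∀ j ∈ I, j ≤ i + 2 := by
          intro i hi j hj
          obtain ⟨e, he, rfl⟩ := Finset.mem_image.mp hi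
          obtain ⟨e', he', rfl⟩ := Finset.mem_image.mp hj
          obtain ⟨_, hid, hadj⟩ := struct e he
          obtain ⟨_, hjd, hadj'⟩ := struct e' he'
          have h1 : G.dist (f (ψ e)) (f (ψ e')) ≤ 2 := by
            calc G.dist (f (ψ e)) (f (ψ e'))
                ≤ G.dist (f (ψ e)) t + G.dist t (f (ψ e')) := hc.dist_triangle
              _ ≤ 2 := by
                  have e1 : G.dist (f (ψ e)) t = 1 := by
                    rw [SimpleGraph.dist_comm]
                    exact SimpleGraph.dist_eq_one_iff_adj.mpr hadj
                  have e2 : G.dist t (f (ψ e')) = 1 :=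
                    SimpleGraph.dist_eq_one_iff_adj.mpr hadj'
                  omega
          have := hwin (ψ e) (ψ e') hid hjd
          omega
        have hmI := I.min'_mem hIne
        have hsub2 : I ⊆ Finset.Icc (I.min' hIne) (I.min' hIne + 2) := by
          intro i hi
          rw [Finset.mem_Icc]
          exact ⟨I.min'_le i hi, hwin2 _ hmI i hi⟩
        calc I.card ≤ (Finset.Icc (I.min' hIne) (I.min' hIne + 2)).card :=
              Finset.card_le_card hsub2
          _ = 3 := by rw [Nat.card_Icc]; omega
    have hsub : C ⊆ T.biUnion (fun t => C.filter (fun e => t ∈ e)) := by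
      intro e he
      have heC := he
      rw [hC, Finset.mem_filter] at he
      obtain ⟨heE, h1, h2⟩ := he
      push_neg at h1
      obtain ⟨t, hte, htS⟩ := h1
      refine Finset.mem_biUnion.mpr ⟨t, ?_, Finset.mem_filter.mpr ⟨heC, hte⟩⟩
      rw [hT, Finset.mem_sdiff]
      exact ⟨Finset.mem_univ t, htS⟩
    calc C.card ≤ (T.biUnion (fun t => C.filter (fun e => t ∈ e))).card :=
          Finset.card_le_card hsub
      _ ≤ ∑ t ∈ T, (C.filter (fun e => t ∈ e)).card := Finset.card_biUnion_le
      _ ≤ ∑ _t ∈ T, 3 := Finset.sum_le_sum pert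
      _ = 3 * (n - d - 1) := by rw [Finset.sum_const, hTcard, smul_eq_mul]; ring
  rw [hE]
  calc E.card ≤ A.card + B.card + C.card := hcards
    _ ≤ d + (n - d - 1) * (n - d - 1 - 1) / 2 + 3 * (n - d - 1) := by omega

lemma construction (d n : ℕ) (hd : 4 ≤ d) (hn : d + 1 ≤ n) :
    ∃ (V : Type) (_ : Fintype V) (G : SimpleGraph V),
      G.Connected ∧ Fintype.card V = n ∧ G.diam = d ∧
      G.edgeSet.ncard = d + (n - d - 1) * (n - d - 1 - 1) / 2 + 3 * (n - d - 1) := by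
  classical
  have npos : 0 < n := by omega
  set R : Fin n → Fin n → Prop := fun a b =>
    (a.val + 1 = b.val ∧ b.val ≤ d) ∨ (d < a.val ∧ d < b.val) ∨
      (d < a.val ∧ 1 ≤ b.val ∧ b.val ≤ 3) with hR
  set G : SimpleGraph (Fin n) := SimpleGraph.fromRel R with hG
  set vtx : ℕ → Fin n := fun i => ⟨i % n, Nat.mod_lt _ npos⟩ with hvtxdef
  have hvtx : ∀ i, i ≤ d → (vtx i).val = i := by
    intro i hi
    show i % n = i
    exact Nat.mod_eq_of_lt (by omega)
  have hveq : ∀ x : Fin n, x.val ≤ d → x = vtx x.val := by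
    intro x hx
    apply Fin.ext
    rw [hvtx _ hx]
  have hAdj : ∀ a b : Fin n, G.Adj a b ↔ a ≠ b ∧ (R a b ∨ R b a) := by
    intro a b; rw [hG]; exact SimpleGraph.fromRel_adj R a b
  have hnev : ∀ a b : Fin n, a.val ≠ b.val → a ≠ b :=
    fun a b h hab => h (congrArg Fin.val hab)
  -- adjacency of consecutive path vertices
  have hadjpath : ∀ i, i + 1 ≤ d → G.Adj (vtx i) (vtx (i + 1)) := by
    intro i hi
    rw [hAdj]
    have h1 := hvtx i (by omega)
    have h2 := hvtx (i+1) hi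
    exact ⟨hnev _ _ (by omega), Or.inl (Or.inl (by omega))⟩
  -- the potential function
  set φ : Fin n → ℕ := fun x => if x.val ≤ d then x.val else 2 with hφ
  have hstep : ∀ a b : Fin n, G.Adj a b → φ b ≤ φ a + 1 := by
    intro a b hab
    rw [hAdj] at hab
    obtain ⟨hne, h | h⟩ := hab <;>
      rcases h with h | h | h <;> simp only [hφ] <;> split <;> split <;> omega
  have hwalk : ∀ (x y : Fin n) (p : G.Walk x y), φ y ≤ φ x + p.length := by
    intro x y p
    induction p with
    | nil => simp
    | cons h q ih =>
      have := hstep _ _ h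
      rw [SimpleGraph.Walk.length_cons]
      omega
  -- upper bounds for edist
  have hpath : ∀ i k, i + k ≤ d → G.edist (vtx i) (vtx (i + k)) ≤ k := by
    intro i k
    induction k with
    | zero => intro _; simp [SimpleGraph.edist_self]
    | succ k ih =>
      intro hik
      have h1 := ih (by omega)
      have h2 : G.edist (vtx (i+k)) (vtx (i+k+1)) = 1 :=
        SimpleGraph.edist_eq_one_iff_adj.mpr (hadjpath (i+k) (by omega))
      calc G.edist (vtx i) (vtx (i+(k+1)))
          ≤ G.edist (vtx i) (vtx (i+k)) + G.edist (vtx (i+k)) (vtx (i+k+1)) := by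
            rw [show i+(k+1) = i+k+1 from rfl]
            exact SimpleGraph.edist_triangle
        _ ≤ (k : ℕ∞) + 1 := by
            rw [h2]; exact add_le_add_left h1 1
        _ = ((k+1 : ℕ) : ℕ∞) := by push_cast; ring
  have hpp : ∀ i j, i ≤ d → j ≤ d → G.edist (vtx i) (vtx j) ≤ (d : ℕ∞) := by
    intro i j hi hj
    rcases le_total i j with h | h
    · have := hpath i (j - i) (by omega)
      rw [show i + (j - i) = j by omega] at this
      exact this.trans (Nat.cast_le.mpr (show j - i ≤ d by omega))
    · have := hpath j (i - j) (by omega)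
      rw [show j + (i - j) = i by omega] at this
      rw [SimpleGraph.edist_comm]
      exact this.trans (Nat.cast_le.mpr (show i - j ≤ d by omega))
  have hadjoin : ∀ t : Fin n, d < t.val → ∀ c, 1 ≤ c → c ≤ 3 → G.Adj t (vtx c) := by
    intro t ht c hc1 hc3
    rw [hAdj]
    have hcv := hvtx c (by omega)
    exact ⟨hnev _ _ (by omega), Or.inl (Or.inr (Or.inr (by omega)))⟩
  have hextra : ∀ t : Fin n, d < t.val → ∀ i, i ≤ d → G.edist t (vtx i) ≤ (d : ℕ∞) := by
    intro t ht i hi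
    have h2 : G.edist t (vtx 2) = 1 :=
      SimpleGraph.edist_eq_one_iff_adj.mpr (hadjoin t ht 2 (by omega) (by omega))
    calc G.edist t (vtx i) ≤ G.edist t (vtx 2) + G.edist (vtx 2) (vtx i) :=
          SimpleGraph.edist_triangle
      _ ≤ 1 + (d - 1 : ℕ) := by
          rw [h2]
          refine add_le_add_right ?_ 1
          rcases le_total 2 i with h | h
          · have := hpath 2 (i - 2) (by omega)
            rw [show 2 + (i - 2) = i by omega] at this
            exact this.trans (Nat.cast_le.mpr (by omega))
          · have := hpath i (2 - i) (by omega)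
            rw [show i + (2 - i) = 2 by omega] at this
            rw [SimpleGraph.edist_comm]
            exact this.trans (Nat.cast_le.mpr (by omega))
      _ ≤ (d : ℕ∞) := by
          rw [show (1 : ℕ∞) = ((1:ℕ) : ℕ∞) from rfl, ← Nat.cast_add]
          exact Nat.cast_le.mpr (by omega)
  have halldist : ∀ x y : Fin n, G.edist x y ≤ (d : ℕ∞) := by
    intro x y
    by_cases hx : x.val ≤ d <;> by_cases hy : y.val ≤ d
    · rw [hveq x hx, hveq y hy]; exact hpp _ _ hx hy
    · rw [hveq x hx, SimpleGraph.edist_comm]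
      exact hextra y (by omega) x.val hx
    · rw [hveq y hy]
      exact hextra x (by omega) y.val hy
    · rcases eq_or_ne x y with rfl | hne
      · simp [SimpleGraph.edist_self]
      · have : G.Adj x y := by
          rw [hAdj]
          exact ⟨hne, Or.inl (Or.inr (Or.inl (by omega)))⟩
        rw [SimpleGraph.edist_eq_one_iff_adj.mpr this]
        exact_mod_cast Nat.one_le_cast.mpr (by omega)
  have hconn : G.Connected := by
    rw [SimpleGraph.connected_iff]
    exact ⟨fun x y => SimpleGraph.reachable_of_edist_ne_top
      (ne_top_of_le_ne_top (by simp) (halldist x y)), ⟨⟨0, npos⟩⟩⟩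
  -- diameter
  have hlow : (d : ℕ∞) ≤ G.edist (vtx 0) (vtx d) := by
    rw [SimpleGraph.edist_eq_sInf]
    refine le_sInf ?_
    rintro x ⟨w, rfl⟩
    have h1 := hwalk _ _ w
    have hd0 : φ (vtx 0) = 0 := by
      show (if (vtx 0).val ≤ d then (vtx 0).val else 2) = 0
      rw [hvtx 0 (by omega)]
      simp
    have hdd : φ (vtx d) = d := by
      show (if (vtx d).val ≤ d then (vtx d).val else 2) = d
      rw [hvtx d le_rfl]
      simp
    exact Nat.cast_le.mpr (by omega)
  have hedist0d : G.edist (vtx 0) (vtx d) = (d : ℕ∞) := by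
    refine le_antisymm ?_ hlow
    have := hpath 0 d (by omega)
    simpa using this
  have hediam : G.ediam = (d : ℕ∞) :=
    le_antisymm (SimpleGraph.ediam_le_of_edist_le fun u v => halldist u v)
      (hedist0d ▸ SimpleGraph.edist_le_ediam)
  have hdiam : G.diam = d := by
    rw [SimpleGraph.diam, hediam]; exact ENat.toNat_coe d
  -- edge count
  set T : Finset (Fin n) := univ.filter (fun x => d < x.val) with hT
  have hmemT : ∀ x : Fin n, x ∈ T ↔ d < x.val := by intro x; simp [hT]
  have hTcard : T.card = n - d - 1 := by
    have h1 : univ.filter (fun x : Fin n => ¬ d < x.val) = (range (d+1)).image vtx := by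
      ext x
      simp only [mem_filter, mem_univ, true_and, not_lt, mem_image, mem_range, Nat.lt_succ_iff]
      constructor
      · intro hx; exact ⟨x.val, hx, (hveq x hx).symm⟩
      · rintro ⟨i, hi, rfl⟩; rw [hvtx i hi]; exact hi
    have h2 : ((range (d+1)).image vtx).card = d + 1 := by
      rw [Finset.card_image_of_injOn, card_range]
      intro i hi j hj hij
      have hi' : i ≤ d := Nat.lt_succ_iff.mp (mem_range.mp (Finset.mem_coe.mp hi))
      have hj' : j ≤ d := Nat.lt_succ_iff.mp (mem_range.mp (Finset.mem_coe.mp hj))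
      have := congrArg Fin.val hij
      rwa [hvtx i hi', hvtx j hj'] at this
    have h4 : T = univ \ ((range (d+1)).image vtx) := by
      ext x
      rw [mem_sdiff, hmemT]
      simp only [mem_univ, true_and, mem_image, mem_range, Nat.lt_succ_iff]
      constructor
      · intro hx
        rintro ⟨i, hi, rfl⟩
        rw [hvtx i hi] at hx
        omega
      · intro hx
        by_contra h
        push_neg at h
        exact hx ⟨x.val, h, (hveq x h).symm⟩
    rw [h4, card_sdiff_of_subset (by intro x _; exact mem_univ x), card_univ, Fintype.card_fin, h2]
    omega
  set E : Finset (Sym2 (Fin n)) := G.edgeSet.toFinset with hEdef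
  have hmemE : ∀ x y : Fin n, s(x,y) ∈ E ↔ G.Adj x y := by intro x y; simp [hEdef]
  set E1 : Finset (Sym2 (Fin n)) := (range d).image (fun i => s(vtx i, vtx (i+1))) with hE1
  set E2 : Finset (Sym2 (Fin n)) := T.sym2.filter (fun e => ¬ e.IsDiag) with hE2
  set E3 : Finset (Sym2 (Fin n)) :=
    (({1,2,3} : Finset ℕ) ×ˢ T).image (fun q => s(vtx q.1, q.2)) with hE3
  have hE1card : E1.card = d := by
    rw [hE1, Finset.card_image_of_injOn, card_range]
    intro i hi j hj hij
    have hi' : i < d := mem_range.mp (Finset.mem_coe.mp hi)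
    have hj' : j < d := mem_range.mp (Finset.mem_coe.mp hj)
    rw [Sym2.eq_iff] at hij
    rcases hij with ⟨h1, _⟩ | ⟨h1, h2⟩
    · have := congrArg Fin.val h1
      rwa [hvtx i (by omega), hvtx j (by omega)] at this
    · have e1 := congrArg Fin.val h1
      have e2 := congrArg Fin.val h2
      rw [hvtx i (by omega), hvtx (j+1) (by omega)] at e1
      rw [hvtx (i+1) (by omega), hvtx j (by omega)] at e2
      omega
  have hE2card : E2.card = (n-d-1) * (n-d-1-1)/2 := by
    rw [hE2, card_sym2_nondiag, hTcard]
  have hE3card : E3.card = 3 * (n-d-1) := by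
    have h123 : ({1,2,3} : Finset ℕ).card = 3 := by decide
    rw [hE3, Finset.card_image_of_injOn, card_product, h123, hTcard]
    rintro ⟨c, t⟩ hq ⟨c', t'⟩ hq' hee
    dsimp only at hee
    rw [Finset.mem_coe, mem_product] at hq hq'
    dsimp only at hq hq'
    have hc : c ≤ 3 ∧ 1 ≤ c := by
      have := hq.1; simp at this; omega
    have hc' : c' ≤ 3 ∧ 1 ≤ c' := by
      have := hq'.1; simp at this; omega
    have ht : d < t.val := (hmemT t).mp hq.2
    have ht' : d < t'.val := (hmemT t').mp hq'.2
    rw [Sym2.eq_iff] at hee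
    rcases hee with ⟨h1, h2⟩ | ⟨h1, h2⟩
    · have := congrArg Fin.val h1
      rw [hvtx c (by omega), hvtx c' (by omega)] at this
      simp only [Prod.mk.injEq]
      exact ⟨this, h2⟩
    · have := congrArg Fin.val h1
      rw [hvtx c (by omega)] at this
      omega
  have hE1sub : E1 ⊆ E := by
    intro e he
    rw [hE1, mem_image] at he
    obtain ⟨i, hi, rfl⟩ := he
    rw [hmemE]
    exact hadjpath i (mem_range.mp hi)
  have hE2sub : E2 ⊆ E := by
    intro e he
    rw [hE2, mem_filter] at he
    induction e using Sym2.ind with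
    | _ x y =>
      obtain ⟨hs, hnd⟩ := he
      rw [mk_mem_sym2_iff] at hs
      rw [Sym2.mk_isDiag_iff] at hnd
      rw [hmemE, hAdj]
      exact ⟨hnd, Or.inl (Or.inr (Or.inl ⟨(hmemT x).mp hs.1, (hmemT y).mp hs.2⟩))⟩
  have hE3sub : E3 ⊆ E := by
    intro e he
    rw [hE3, mem_image] at he
    obtain ⟨⟨c, t⟩, hq, rfl⟩ := he
    rw [mem_product] at hq
    dsimp only at hq ⊢
    have hc : c ≤ 3 ∧ 1 ≤ c := by
      have := hq.1; simp at this; omega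
    have ht : d < t.val := (hmemT t).mp hq.2
    have hcv := hvtx c (by omega)
    rw [hmemE, hAdj]
    exact ⟨hnev _ _ (by omega), Or.inr (Or.inr (Or.inr ⟨ht, by omega, by omega⟩))⟩
  have hEeq : E = E1 ∪ E2 ∪ E3 := by
    refine subset_antisymm ?_ (union_subset (union_subset hE1sub hE2sub) hE3sub)
    intro e he
    induction e using Sym2.ind with
    | _ x y =>
      have hadj : G.Adj x y := (hmemE x y).mp he
      rw [hAdj] at hadj
      obtain ⟨hne, hr⟩ := hadj
      have hnev2 : x.val ≠ y.val := fun h => hne (Fin.ext h)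
      simp only [mem_union]
      rcases hr with h | h
      · rcases h with ⟨h1, h2⟩ | ⟨h1, h2⟩ | ⟨h1, h2, h3⟩
        · left; left
          rw [hE1, mem_image]
          refine ⟨x.val, mem_range.mpr (by omega), ?_⟩
          refine Sym2.eq_iff.mpr (Or.inl ⟨(hveq x (by omega)).symm, ?_⟩)
          apply Fin.ext
          rw [hvtx (x.val + 1) (by omega)]
          omega
        · left; right
          rw [hE2, mem_filter, mk_mem_sym2_iff, Sym2.mk_isDiag_iff]
          exact ⟨⟨(hmemT x).mpr h1, (hmemT y).mpr h2⟩, hne⟩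
        · right
          rw [hE3, mem_image]
          refine ⟨(y.val, x), ?_, ?_⟩
          · rw [mem_product]
            refine ⟨by simp; omega, (hmemT x).mpr h1⟩
          · exact Sym2.eq_iff.mpr (Or.inr ⟨(hveq y (by omega)).symm, rfl⟩)
      · rcases h with ⟨h1, h2⟩ | ⟨h1, h2⟩ | ⟨h1, h2, h3⟩
        · left; left
          rw [hE1, mem_image]
          refine ⟨y.val, mem_range.mpr (by omega), ?_⟩
          refine Sym2.eq_iff.mpr (Or.inr ⟨(hveq y (by omega)).symm, ?_⟩)
          apply Fin.ext
          rw [hvtx (y.val + 1) (by omega)]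
          omega
        · left; right
          rw [hE2, mem_filter, mk_mem_sym2_iff, Sym2.mk_isDiag_iff]
          exact ⟨⟨(hmemT x).mpr h2, (hmemT y).mpr h1⟩, hne⟩
        · right
          rw [hE3, mem_image]
          refine ⟨(x.val, y), ?_, ?_⟩
          · rw [mem_product]
            refine ⟨by simp; omega, (hmemT y).mpr h1⟩
          · exact Sym2.eq_iff.mpr (Or.inl ⟨(hveq x (by omega)).symm, rfl⟩)
  have hd12 : Disjoint E1 E2 := by
    rw [Finset.disjoint_left]
    intro e he1 he2
    rw [hE1, mem_image] at he1
    obtain ⟨i, hi, rfl⟩ := he1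
    rw [hE2, mem_filter, mk_mem_sym2_iff] at he2
    have := (hmemT _).mp he2.1.1
    rw [hvtx i (by have := mem_range.mp hi; omega)] at this
    have := mem_range.mp hi
    omega
  have hd13 : Disjoint E1 E3 := by
    rw [Finset.disjoint_left]
    intro e he1 he3
    rw [hE1, mem_image] at he1
    obtain ⟨i, hi, rfl⟩ := he1
    have hi' := mem_range.mp hi
    rw [hE3, mem_image] at he3
    obtain ⟨⟨c, t⟩, hq, heq⟩ := he3
    dsimp only at heq
    rw [mem_product] at hq
    dsimp only at hq
    have ht : d < t.val := (hmemT t).mp hq.2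
    rw [Sym2.eq_iff] at heq
    rcases heq with ⟨h1, h2⟩ | ⟨h1, h2⟩
    · have := congrArg Fin.val h2
      rw [hvtx (i+1) (by omega)] at this
      omega
    · have := congrArg Fin.val h2
      rw [hvtx i (by omega)] at this
      omega
  have hd23 : Disjoint E2 E3 := by
    rw [Finset.disjoint_left]
    intro e he2 he3
    rw [hE3, mem_image] at he3
    obtain ⟨⟨c, t⟩, hq, heq⟩ := he3
    dsimp only at heq
    rw [mem_product] at hq
    dsimp only at hq
    have hc : c ≤ 3 ∧ 1 ≤ c := by
      have := hq.1; simp at this; omega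
    rw [← heq, hE2, mem_filter, mk_mem_sym2_iff] at he2
    have := (hmemT _).mp he2.1.1
    rw [hvtx c (by omega)] at this
    omega
  have hcount : E.card = d + (n-d-1)*(n-d-1-1)/2 + 3*(n-d-1) := by
    rw [hEeq, Finset.card_union_of_disjoint (Finset.disjoint_union_left.mpr ⟨hd13, hd23⟩),
      Finset.card_union_of_disjoint hd12, hE1card, hE2card, hE3card]
  refine ⟨Fin n, inferInstance, G, hconn, by simp, hdiam, ?_⟩
  rw [Set.ncard_eq_toFinset_card', hcount]


/-- Ore's theorem in the case `k = 1`: for `d ≥ 4` and `n ≥ d + 1`, the maximum size of a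
simple connected graph of order `n` and diameter `d` equals
`d + C(n-d-1, 2) + 3(n-d-1)`. -/
theorem max_size_connected_diam_ge_four (d n : ℕ) (hd : 4 ≤ d) (hn : d + 1 ≤ n) :
    (∀ (V : Type) [Fintype V] (G : SimpleGraph V),
        G.Connected → Fintype.card V = n → G.diam = d →
        G.edgeSet.ncard ≤ d + (n - d - 1) * (n - d - 1 - 1) / 2 + 3 * (n - d - 1)) ∧
    (∃ (V : Type) (_ : Fintype V) (G : SimpleGraph V),
        G.Connected ∧ Fintype.card V = n ∧ G.diam = d ∧
        G.edgeSet.ncard = d + (n - d - 1) * (n - d - 1 - 1) / 2 + 3 * (n - d - 1)) := by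
  exact ⟨fun V _ G hc hcard hdiam => upper_bound d n (by omega) hn V G hc hcard hdiam,
    construction d n hd hn⟩
end

section
/- Let k ≥ 1, d ≥ 2, and n ≥ k(d-1)+2, and let G be a simple k-connected graph of order n and diameter d having the maximum number of edges among all simple k-connected graphs of order n and diameter d. Then G contains a subgraph T = T₁ ∨ T₂ ∨ ⋯ ∨ T_{d+1} (sequential join with T₁ = T_{d+1} = K₁ and T₂ = ⋯ = T_d = K_k) such that the set R = V(G) ∖ V(T) induces a clique in G, every vertex of R has all of its neighbors in T contained in the union of three consecutive parts T_i ∪ T_{i+1} ∪ T_{i+2}, and the union over all vertices of R of their neighborhoods in T is contained in the union of at most four consecutive parts T_i ∪ T_{i+1} ∪ T_{i+2} ∪ T_{i+3}, with each vertex of R joined to all vertices of either the first three or the last three of these consecutive parts. -/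
open Finset in
section
set_option linter.unusedSectionVars false
set_option maxHeartbeats 1000000
namespace OreAux

variable {V : Type} [Fintype V] [DecidableEq V]

def lvlGraph (f : V → ℕ) : SimpleGraph V where
  Adj u v := u ≠ v ∧ Nat.dist (f u) (f v) ≤ 1
  symm := by
    refine ⟨fun u v h => ?_⟩
    exact ⟨h.1.symm, by rw [Nat.dist_comm]; exact h.2⟩
  loopless := by refine ⟨fun v h => ?_⟩; exact h.1 rfl

lemma lvlGraph_adj (f : V → ℕ) (u v : V) :
    (lvlGraph f).Adj u v ↔ u ≠ v ∧ Nat.dist (f u) (f v) ≤ 1 := Iff.rfl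

instance (f : V → ℕ) : DecidableRel (lvlGraph f).Adj := fun u v =>
  inferInstanceAs (Decidable (u ≠ v ∧ Nat.dist (f u) (f v) ≤ 1))

def lv (f : V → ℕ) (i : ℕ) : Finset V := univ.filter (fun v => f v = i)

lemma mem_lv {f : V → ℕ} {i : ℕ} {v : V} : v ∈ lv f i ↔ f v = i := by simp [lv]

lemma exists_walk_up {f : V → ℕ} {d : ℕ} (hne : ∀ i, i ≤ d → (lv f i).Nonempty) :
    ∀ (m : ℕ) (u v : V), f u ≤ f v → f v ≤ d → f v - f u = m →
      ∃ p : (lvlGraph f).Walk u v, p.length ≤ max m 1 := by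
  intro m
  induction m with
  | zero =>
    intro u v h1 hd h2
    by_cases huv : u = v
    · subst huv; exact ⟨SimpleGraph.Walk.nil, by simp⟩
    · refine ⟨SimpleGraph.Adj.toWalk (show (lvlGraph f).Adj u v from ⟨huv, ?_⟩), by simp⟩
      simp [Nat.dist]; omega
  | succ m ih =>
    intro u v h1 hd h2
    rcases Nat.eq_zero_or_pos m with hm | hm
    · subst hm
      refine ⟨SimpleGraph.Adj.toWalk (show (lvlGraph f).Adj u v from ⟨?_, ?_⟩), by simp⟩
      · intro he; rw [he] at h2; omega
      · simp [Nat.dist]; omega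
    · obtain ⟨w, hw⟩ := hne (f u + 1) (by omega)
      rw [mem_lv] at hw
      have hadj : (lvlGraph f).Adj u w := by
        refine ⟨fun he => ?_, by simp [Nat.dist, hw]⟩
        rw [he] at hw; omega
      obtain ⟨p, hp⟩ := ih w v (by omega) hd (by omega)
      exact ⟨SimpleGraph.Walk.cons hadj p, by simp; omega⟩

lemma lvlGraph_exists_walk {f : V → ℕ} {d : ℕ} (hfd : ∀ v, f v ≤ d)
    (hne : ∀ i, i ≤ d → (lv f i).Nonempty) (u v : V) :
    ∃ p : (lvlGraph f).Walk u v, p.length ≤ max (Nat.dist (f u) (f v)) 1 := by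
  rcases le_total (f u) (f v) with h | h
  · obtain ⟨p, hp⟩ := exists_walk_up hne (f v - f u) u v h (hfd v) rfl
    refine ⟨p, le_trans hp ?_⟩
    have : Nat.dist (f u) (f v) = f v - f u := by simp [Nat.dist]; omega
    omega
  · obtain ⟨p, hp⟩ := exists_walk_up hne (f u - f v) v u h (hfd u) rfl
    refine ⟨p.reverse, ?_⟩
    rw [SimpleGraph.Walk.length_reverse]
    refine le_trans hp ?_
    have : Nat.dist (f u) (f v) = f u - f v := by simp [Nat.dist]; omega
    omega

lemma lvlGraph_connected {f : V → ℕ} {d : ℕ} (hfd : ∀ v, f v ≤ d)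
    (hne : ∀ i, i ≤ d → (lv f i).Nonempty) : (lvlGraph f).Connected := by
  obtain ⟨v0, _⟩ := hne 0 (Nat.zero_le d)
  have : Nonempty V := ⟨v0⟩
  rw [SimpleGraph.connected_iff]
  refine ⟨fun u v => ?_, this⟩
  obtain ⟨p, _⟩ := lvlGraph_exists_walk hfd hne u v
  exact ⟨p⟩

lemma lvlGraph_lipschitz (f : V → ℕ) :
    ∀ u v, (lvlGraph f).Adj u v → Nat.dist (f u) (f v) ≤ 1 := fun _ _ h => h.2

lemma walk_length_ge {G : SimpleGraph V} {f : V → ℕ}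
    (hf : ∀ u v, G.Adj u v → Nat.dist (f u) (f v) ≤ 1) :
    ∀ {u v : V} (p : G.Walk u v), Nat.dist (f u) (f v) ≤ p.length := by
  intro u v p
  induction p with
  | nil => simp
  | @cons a b c h p ih =>
    have h1 := hf _ _ h
    have tri : Nat.dist (f a) (f c) ≤ Nat.dist (f a) (f b) + Nat.dist (f b) (f c) := by
      simp [Nat.dist]; omega
    simp only [SimpleGraph.Walk.length_cons]
    omega

lemma walk_ivt {G : SimpleGraph V} {f : V → ℕ}
    (hf : ∀ u v, G.Adj u v → Nat.dist (f u) (f v) ≤ 1) :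
    ∀ {u v : V} (p : G.Walk u v) (i : ℕ), f u ≤ i → i ≤ f v →
      ∃ w ∈ p.support, f w = i := by
  intro u v p
  induction p with
  | @nil a => intro i h1 h2; exact ⟨a, by simp, by omega⟩
  | @cons a b c h p ih =>
    intro i h1 h2
    rcases eq_or_lt_of_le h1 with heq | hlt
    · exact ⟨a, by simp, heq⟩
    · have h3 := hf _ _ h
      have hb : f b ≤ i := by simp [Nat.dist] at h3; omega
      obtain ⟨w, hw, hwf⟩ := ih i hb h2
      exact ⟨w, by simp [hw], hwf⟩

lemma lvlGraph_diam {f : V → ℕ} {d : ℕ} (hd1 : 1 ≤ d) (hfd : ∀ v, f v ≤ d)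
    (hne : ∀ i, i ≤ d → (lv f i).Nonempty) : (lvlGraph f).diam = d := by
  have hconn := lvlGraph_connected hfd hne
  have hedist : ∀ u v, (lvlGraph f).edist u v ≤ (d : ℕ∞) := by
    intro u v
    obtain ⟨p, hp⟩ := lvlGraph_exists_walk hfd hne u v
    refine le_trans (SimpleGraph.Walk.edist_le p) ?_
    have h2 : p.length ≤ d := by
      have := hfd u; have := hfd v
      simp [Nat.dist] at hp ⊢; omega
    exact_mod_cast h2
  have hetop : (lvlGraph f).ediam ≠ ⊤ := by
    have := SimpleGraph.ediam_le_of_edist_le hedist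
    intro h; rw [h] at this
    exact (by simp : ¬ ((⊤ : ℕ∞) ≤ (d : ℕ∞))) this
  have h1 : (lvlGraph f).diam ≤ d := by
    have := SimpleGraph.ediam_le_of_edist_le hedist
    have := ENat.toNat_le_toNat this (by simp)
    simpa [SimpleGraph.diam] using this
  have h2 : d ≤ (lvlGraph f).diam := by
    obtain ⟨u0, hu0⟩ := hne 0 (Nat.zero_le d)
    obtain ⟨v0, hv0⟩ := hne d le_rfl
    rw [mem_lv] at hu0 hv0
    have hr : d ≤ (lvlGraph f).dist u0 v0 := by
      obtain ⟨p, hp⟩ := (hconn u0 v0).exists_walk_length_eq_dist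
      have := walk_length_ge (lvlGraph_lipschitz f) p
      rw [hu0, hv0] at this
      simp [Nat.dist] at this; omega
    exact le_trans hr (SimpleGraph.dist_le_diam hetop)
  omega

lemma lvlGraph_kconn {f : V → ℕ} {d k : ℕ} (hk : 1 ≤ k) (hd : 2 ≤ d)
    (hkcard : k < Fintype.card V)
    (hfd : ∀ v, f v ≤ d) (hne : ∀ i, i ≤ d → (lv f i).Nonempty)
    (hkk : ∀ i, 1 ≤ i → i + 1 ≤ d → k ≤ (lv f i).card) :
    (lvlGraph f).KConnected k := by
  refine ⟨hkcard, fun S hS => ?_⟩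
  have hsurv : ∀ i, 1 ≤ i → i + 1 ≤ d → ∃ v, f v = i ∧ v ∉ S := by
    intro i h1 h2
    by_contra hc
    push_neg at hc
    have hsub : lv f i ⊆ S.toFinite.toFinset := by
      intro v hv
      rw [mem_lv] at hv
      rw [Set.Finite.mem_toFinset]
      exact hc v hv
    have := Finset.card_le_card hsub
    rw [← Set.ncard_eq_toFinset_card S S.toFinite] at this
    have := hkk i h1 h2
    omega
  have hs : ∀ i, ∃ v, v ∉ S ∧ (1 ≤ i ∧ i + 1 ≤ d → f v = i) := by
    intro i
    by_cases h : 1 ≤ i ∧ i + 1 ≤ d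
    · obtain ⟨v, hv1, hv2⟩ := hsurv i h.1 h.2
      exact ⟨v, hv2, fun _ => hv1⟩
    · obtain ⟨v, hv1, hv2⟩ := hsurv 1 le_rfl (by omega)
      exact ⟨v, hv2, fun hh => absurd hh h⟩
  choose s hs1 hs2 using hs
  have hfs : ∀ i, 1 ≤ i → i + 1 ≤ d → f (s i) = i := fun i h1 h2 => hs2 i ⟨h1, h2⟩
  have hmem : ∀ i, (s i : V) ∈ (Sᶜ : Set V) := fun i => hs1 i
  have hadj : ∀ (a b : (Sᶜ : Set V)), (a : V) ≠ b → Nat.dist (f a) (f b) ≤ 1 →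
      ((lvlGraph f).induce Sᶜ).Adj a b := by
    intro a b h1 h2
    simp only [SimpleGraph.comap_adj, Function.Embedding.coe_subtype]
    exact ⟨h1, h2⟩
  have hchain : ∀ i, 1 ≤ i → i + 1 ≤ d →
      ((lvlGraph f).induce Sᶜ).Reachable ⟨s i, hmem i⟩ ⟨s 1, hmem 1⟩ := by
    intro i
    induction i with
    | zero => omega
    | succ j ih =>
      intro h1 h2
      rcases Nat.eq_zero_or_pos j with hj | hj
      · subst hj; exact SimpleGraph.Reachable.refl _
      · have hja : 1 ≤ j := hj
        have hjb : j + 1 ≤ d := by omega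
        have hadjj : ((lvlGraph f).induce Sᶜ).Adj ⟨s (j+1), hmem (j+1)⟩ ⟨s j, hmem j⟩ := by
          apply hadj
          · intro he
            have : f (s (j+1)) = f (s j) := by simp at he; rw [he]
            rw [hfs _ h1 h2, hfs _ hja hjb] at this; omega
          · rw [hfs _ h1 h2, hfs _ hja hjb]; simp [Nat.dist]
        exact (hadjj.reachable).trans (ih hja hjb)
  have hkey : ∀ (a : (Sᶜ : Set V)), ((lvlGraph f).induce Sᶜ).Reachable a ⟨s 1, hmem 1⟩ := by
    intro a
    set i := f (a : V) with hia
    have hid : i ≤ d := hfd _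
    have h1d : 1 + 1 ≤ d := by omega
    rcases Nat.eq_zero_or_pos i with h0 | h1
    · refine (hadj a ⟨s 1, hmem 1⟩ ?_ ?_).reachable
      · intro he
        have : f (a : V) = f (s 1) := by rw [he]
        rw [hfs 1 le_rfl h1d] at this; omega
      · rw [hfs 1 le_rfl h1d, ← hia, h0]; simp [Nat.dist]
    · rcases Nat.lt_or_ge i d with hlt | hge
      · have hib : i + 1 ≤ d := hlt
        by_cases hv : (a : V) = s i
        · have : a = ⟨s i, hmem i⟩ := Subtype.ext hv
          rw [this]; exact hchain i h1 hib
        · refine ((hadj a ⟨s i, hmem i⟩ hv ?_).reachable).trans (hchain i h1 hib)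
          rw [hfs i h1 hib, ← hia]; simp [Nat.dist]
      · have hieq : i = d := le_antisymm hid hge
        have hda : 1 ≤ d - 1 := by omega
        have hdb : (d - 1) + 1 ≤ d := by omega
        refine ((hadj a ⟨s (d-1), hmem (d-1)⟩ ?_ ?_).reachable).trans (hchain (d-1) hda hdb)
        · intro he
          have : f (a : V) = f (s (d-1)) := by rw [he]
          rw [hfs _ hda hdb] at this; omega
        · rw [hfs _ hda hdb, ← hia, hieq]; simp [Nat.dist]; omega
  rw [SimpleGraph.connected_iff]
  exact ⟨fun a b => (hkey a).trans (hkey b).symm, ⟨⟨s 1, hmem 1⟩⟩⟩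

lemma edge_split (G : SimpleGraph V) [DecidableRel G.Adj] (w : V) :
    G.edgeFinset.card
      = (G.edgeFinset.filter (fun e => w ∉ e)).card + G.degree w := by
  have h := Finset.card_filter_add_card_filter_not
    (s := G.edgeFinset) (p := fun e => w ∈ e)
  rw [← SimpleGraph.incidenceFinset_eq_filter, SimpleGraph.card_incidenceFinset_eq_degree] at h
  omega

lemma nonw_edges_eq {f g : V → ℕ} {w : V} (hfg : ∀ z, z ≠ w → f z = g z) :
    (lvlGraph f).edgeFinset.filter (fun e => w ∉ e)
      = (lvlGraph g).edgeFinset.filter (fun e => w ∉ e) := by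
  ext e
  induction e with
  | _ u v =>
    simp only [Finset.mem_filter, SimpleGraph.mem_edgeFinset, SimpleGraph.mem_edgeSet,
      Sym2.mem_iff, not_or]
    constructor
    · rintro ⟨⟨h1, h2⟩, h3, h4⟩
      refine ⟨⟨h1, ?_⟩, h3, h4⟩
      rw [← hfg u (fun h => h3 h.symm), ← hfg v (fun h => h4 h.symm)]; exact h2
    · rintro ⟨⟨h1, h2⟩, h3, h4⟩
      refine ⟨⟨h1, ?_⟩, h3, h4⟩
      rw [hfg u (fun h => h3 h.symm), hfg v (fun h => h4 h.symm)]; exact h2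

def ncnt (f : V → ℕ) (c : ℕ) : ℕ := (univ.filter (fun z => Nat.dist (f z) c ≤ 1)).card

lemma degree_update {f : V → ℕ} {w : V} {c : ℕ} (h2 : 2 ≤ Nat.dist (f w) c) :
    (lvlGraph (Function.update f w c)).degree w = ncnt f c := by
  rw [SimpleGraph.degree, SimpleGraph.neighborFinset_eq_filter, ncnt]
  congr 1
  ext z
  simp only [Finset.mem_filter, Finset.mem_univ, true_and]
  constructor
  · rintro ⟨h1, hz⟩
    rw [Function.update_self, Function.update_of_ne (Ne.symm h1)] at hz
    rwa [Nat.dist_comm]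
  · intro hz
    have hzw : z ≠ w := by
      intro he; subst he
      omega
    refine ⟨Ne.symm hzw, ?_⟩
    rw [Function.update_self, Function.update_of_ne hzw]
    rwa [Nat.dist_comm] at hz

lemma degree_self (f : V → ℕ) (w : V) :
    (lvlGraph f).degree w + 1 = ncnt f (f w) := by
  rw [SimpleGraph.degree, SimpleGraph.neighborFinset_eq_filter, ncnt]
  have : (univ.filter (fun z => Nat.dist (f z) (f w) ≤ 1))
      = insert w (univ.filter (fun z => (lvlGraph f).Adj w z)) := by
    ext z
    simp only [Finset.mem_insert, Finset.mem_filter, Finset.mem_univ, true_and]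
    constructor
    · intro hz
      by_cases hzw : z = w
      · exact Or.inl hzw
      · exact Or.inr ⟨Ne.symm hzw, by rwa [Nat.dist_comm]⟩
    · rintro (h | ⟨h1, h2⟩)
      · subst h; simp [Nat.dist]
      · rwa [Nat.dist_comm]
  rw [this, Finset.card_insert_of_notMem (by intro h; exact (Finset.mem_filter.mp h).2.1 rfl)]

lemma lv_update_src {f : V → ℕ} {w : V} {c : ℕ} (hc : c ≠ f w) :
    lv (Function.update f w c) (f w) = (lv f (f w)).erase w := by
  unfold lv
  ext z
  by_cases hz : z = w
  · subst hz; simp [Function.update_self, hc]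
  · simp [Function.update_of_ne hz, hz]

lemma lv_update_tgt {f : V → ℕ} {w : V} {c : ℕ} (hc : c ≠ f w) :
    lv (Function.update f w c) c = insert w (lv f c) := by
  unfold lv
  ext z
  by_cases hz : z = w
  · subst hz; simp [Function.update_self]
  · simp [Function.update_of_ne hz, hz, eq_comm]

lemma lv_update_other {f : V → ℕ} {w : V} {c i : ℕ} (h1 : i ≠ f w) (h2 : i ≠ c) :
    lv (Function.update f w c) i = lv f i := by
  unfold lv
  ext z
  by_cases hz : z = w
  · subst hz; simp [Function.update_self, h1.symm, h2.symm, Ne.symm]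
  · simp [Function.update_of_ne hz]

lemma edgecount_eq {G : SimpleGraph V} [DecidableRel G.Adj] :
    G.edgeSet.ncard = G.edgeFinset.card := by
  rw [← SimpleGraph.coe_edgeFinset, Set.ncard_coe_finset]

lemma move {k d n : ℕ} {G : SimpleGraph V} {f : V → ℕ}
    (hk : 1 ≤ k) (hd : 2 ≤ d) (hcard : Fintype.card V = n) (hkcard : k < Fintype.card V)
    (hGeq : G = lvlGraph f)
    (hfd : ∀ v, f v ≤ d) (hne : ∀ i, i ≤ d → (lv f i).Nonempty)
    (hkk : ∀ i, 1 ≤ i → i + 1 ≤ d → k ≤ (lv f i).card)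
    (hmax : ∀ (W : Type) [Fintype W] (H : SimpleGraph W),
      H.KConnected k → Fintype.card W = n → H.diam = d →
      H.edgeSet.ncard ≤ G.edgeSet.ncard)
    {s t : ℕ} (hsd : s ≤ d) (htd : t ≤ d) (hdist : 2 ≤ Nat.dist s t)
    (hcs : 2 ≤ (lv f s).card) (hms : s + 1 ≤ d → k + 1 ≤ (lv f s).card) :
    ncnt f t + 1 ≤ ncnt f s := by
  obtain ⟨w, hw⟩ := (Finset.one_le_card).mp (by omega : 1 ≤ (lv f s).card)
  rw [mem_lv] at hw
  have hts : t ≠ s := by intro h; rw [h] at hdist; simp [Nat.dist] at hdist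
  set f' := Function.update f w t with hf'
  have hlvs : lv f' s = (lv f s).erase w := by
    rw [hf', ← hw]; exact lv_update_src (by rw [hw]; exact hts)
  have hlvt : lv f' t = insert w (lv f t) := by
    rw [hf']; exact lv_update_tgt (by rw [hw]; exact hts)
  have hlvo : ∀ i, i ≠ s → i ≠ t → lv f' i = lv f i := by
    intro i h1 h2
    rw [hf']; exact lv_update_other (by rw [hw]; exact h1) h2
  have hfd' : ∀ v, f' v ≤ d := by
    intro v
    by_cases hv : v = w
    · subst hv; rw [hf', Function.update_self]; exact htd
    · rw [hf', Function.update_of_ne hv]; exact hfd v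
  have hne' : ∀ i, i ≤ d → (lv f' i).Nonempty := by
    intro i hi
    by_cases h1 : i = s
    · subst h1
      rw [hlvs, ← Finset.card_pos, Finset.card_erase_of_mem (mem_lv.mpr hw)]
      omega
    · by_cases h2 : i = t
      · subst h2; rw [hlvt]; exact Finset.insert_nonempty _ _
      · rw [hlvo i h1 h2]; exact hne i hi
  have hkk' : ∀ i, 1 ≤ i → i + 1 ≤ d → k ≤ (lv f' i).card := by
    intro i h1 h2
    by_cases hs1 : i = s
    · subst hs1
      rw [hlvs, Finset.card_erase_of_mem (mem_lv.mpr hw)]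
      have := hms h2; omega
    · by_cases ht1 : i = t
      · subst ht1
        rw [hlvt]
        exact le_trans (hkk i h1 h2) (Finset.card_le_card (Finset.subset_insert _ _))
      · rw [hlvo i hs1 ht1]; exact hkk i h1 h2
  have hkc : (lvlGraph f').KConnected k := lvlGraph_kconn hk hd hkcard hfd' hne' hkk'
  have hdm : (lvlGraph f').diam = d := lvlGraph_diam (by omega) hfd' hne'
  have hle := hmax V (lvlGraph f') hkc hcard hdm
  rw [hGeq, edgecount_eq, edgecount_eq] at hle
  rw [edge_split (lvlGraph f') w, edge_split (lvlGraph f) w] at hle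
  have hB : (lvlGraph f').edgeFinset.filter (fun e => w ∉ e)
      = (lvlGraph f).edgeFinset.filter (fun e => w ∉ e) := by
    apply nonw_edges_eq
    intro z hz
    rw [hf', Function.update_of_ne hz]
  rw [hB] at hle
  have hdu : (lvlGraph f').degree w = ncnt f t := by
    rw [hf']
    exact degree_update (by rw [hw, Nat.dist_comm]; rwa [Nat.dist_comm] at hdist)
  have hds := degree_self f w
  rw [hw] at hds
  rw [hdu] at hle
  omega

lemma exchange {k d n : ℕ} {G : SimpleGraph V} {f : V → ℕ}
    (hk : 1 ≤ k) (hd : 2 ≤ d) (hcard : Fintype.card V = n) (hkcard : k < Fintype.card V)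
    (hGeq : G = lvlGraph f)
    (hfd : ∀ v, f v ≤ d) (hne : ∀ i, i ≤ d → (lv f i).Nonempty)
    (hkk : ∀ i, 1 ≤ i → i + 1 ≤ d → k ≤ (lv f i).card)
    (hmax : ∀ (W : Type) [Fintype W] (H : SimpleGraph W),
      H.KConnected k → Fintype.card W = n → H.diam = d →
      H.edgeSet.ncard ≤ G.edgeSet.ncard)
    {a b : ℕ} (hab : a + 2 ≤ b) (hbd : b ≤ d)
    (hsa : k + 1 ≤ (lv f a).card)
    (hsb1 : 2 ≤ (lv f b).card) (hsb2 : b + 1 ≤ d → k + 1 ≤ (lv f b).card) : False := by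
  have hd1 : Nat.dist a b = b - a := by simp [Nat.dist]; omega
  have hd2 : Nat.dist b a = b - a := by simp [Nat.dist]; omega
  have h1 := move hk hd hcard hkcard hGeq hfd hne hkk hmax
    (s := a) (t := b) (by omega) hbd (by omega) (by omega) (fun _ => hsa)
  have h2 := move hk hd hcard hkcard hGeq hfd hne hkk hmax
    (s := b) (t := a) hbd (by omega) (by omega) hsb1 hsb2
  omega

end OreAux


end

set_option maxHeartbeats 1000000 in
open OreAux Finset in
/-- Structure of the extremal graphs in Ore's theorem.  Let `G` be a simple `k`-connected
graph of order `n` and diameter `d` with the maximum number of edges.  Then `G` contains a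
subgraph `T = T₁ ∨ T₂ ∨ ⋯ ∨ T_{d+1}` (a sequential join with `T₁ = T_{d+1} = K₁` and
`T₂ = ⋯ = T_d = K_k`, here given by parts `T 0, T 1, …, T d`, each part a clique and
consecutive parts completely joined) such that the set `R` of vertices outside `T` induces
a clique, every vertex of `R` has all of its neighbors in `T` inside three consecutive
parts, and the neighborhoods in `T` of all vertices of `R` together lie in at most four
consecutive parts `T j ∪ T (j+1) ∪ T (j+2) ∪ T (j+3)`, with every vertex of `R` joined to
all vertices of either the first three or the last three of these parts. -/
theorem extremal_structure (k d n : ℕ) {V : Type} [Fintype V] [DecidableEq V]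
    (G : SimpleGraph V) (hk : 1 ≤ k) (hd : 2 ≤ d) (hn : k * (d - 1) + 2 ≤ n)
    (hG : G.KConnected k) (hcard : Fintype.card V = n) (hdiam : G.diam = d)
    (hmax : ∀ (W : Type) [Fintype W] (H : SimpleGraph W),
      H.KConnected k → Fintype.card W = n → H.diam = d →
      H.edgeSet.ncard ≤ G.edgeSet.ncard) :
    ∃ T : ℕ → Finset V,
      -- the parts have the right sizes: `T 0` and `T d` are single vertices, the middle
      -- parts `T 1, …, T (d-1)` have `k` vertices each, and there are no further parts
      (T 0).card = 1 ∧ (T d).card = 1 ∧ (∀ i : ℕ, 0 < i → i < d → (T i).card = k) ∧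
      (∀ i : ℕ, d < i → T i = ∅) ∧
      (∀ i j : ℕ, i ≠ j → Disjoint (T i) (T j)) ∧
      -- the sequential join of the parts is a subgraph of `G`:
      -- each part is a clique and consecutive parts are completely joined
      (∀ i : ℕ, ∀ u ∈ T i, ∀ v ∈ T i, u ≠ v → G.Adj u v) ∧
      (∀ i : ℕ, i < d → ∀ u ∈ T i, ∀ v ∈ T (i + 1), G.Adj u v) ∧
      -- with `R` the set of vertices outside `T`:
      (let tVerts : Finset V := (Finset.range (d + 1)).biUnion T
       let R : Finset V := tVertsᶜ
       -- `R` induces a clique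
       (∀ u ∈ R, ∀ v ∈ R, u ≠ v → G.Adj u v) ∧
       -- each vertex of `R` has all its neighbors in `T` inside three consecutive parts
       (∀ r ∈ R, ∃ i : ℕ, ∀ v ∈ tVerts, G.Adj r v → v ∈ T i ∪ T (i + 1) ∪ T (i + 2)) ∧
       -- all neighborhoods in `T` of vertices of `R` lie in four consecutive parts, and
       -- each vertex of `R` is joined to all of the first three or all of the last three
       (∃ j : ℕ,
         (∀ r ∈ R, ∀ v ∈ tVerts, G.Adj r v →
            v ∈ T j ∪ T (j + 1) ∪ T (j + 2) ∪ T (j + 3)) ∧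
         (∀ r ∈ R,
            (∀ v ∈ T j ∪ T (j + 1) ∪ T (j + 2), G.Adj r v) ∨
            (∀ v ∈ T (j + 1) ∪ T (j + 2) ∪ T (j + 3), G.Adj r v)))) := by
  classical
  have hNV : Nonempty V := by
    rw [← Fintype.card_pos_iff]
    omega
  have hconn : G.Connected := by
    have h := hG.2 ∅ (by simp; omega)
    rw [Set.compl_empty] at h
    exact (SimpleGraph.Iso.connected_iff (SimpleGraph.induceUnivIso G)).mp h
  obtain ⟨x, y, hxy⟩ := SimpleGraph.exists_dist_eq_diam (G := G)
  rw [hdiam] at hxy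
  set ℓ : V → ℕ := fun v => G.dist x v with hldef
  have hlx : ℓ x = 0 := SimpleGraph.dist_self
  have hly : ℓ y = d := hxy
  have hetop : G.ediam ≠ ⊤ :=
    SimpleGraph.ediam_ne_top_of_diam_ne_zero (by rw [hdiam]; omega)
  have hfd : ∀ v, ℓ v ≤ d := fun v => by
    rw [← hdiam]; exact SimpleGraph.dist_le_diam hetop
  have hlip : ∀ u v, G.Adj u v → Nat.dist (ℓ u) (ℓ v) ≤ 1 := by
    intro u v huv
    have h1 : G.dist x v ≤ G.dist x u + G.dist u v := hconn.dist_triangle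
    have h2 : G.dist x u ≤ G.dist x v + G.dist v u := hconn.dist_triangle
    have h3 : G.dist u v = 1 := SimpleGraph.dist_eq_one_iff_adj.mpr huv
    have h4 : G.dist v u = 1 := SimpleGraph.dist_eq_one_iff_adj.mpr huv.symm
    simp only [hldef, Nat.dist]
    omega
  have hne : ∀ i, i ≤ d → (lv ℓ i).Nonempty := by
    intro i hi
    obtain ⟨p⟩ := hconn x y
    obtain ⟨w, _, hw⟩ := walk_ivt hlip p i (by omega) (by rw [hly]; exact hi)
    exact ⟨w, mem_lv.mpr hw⟩
  have hkk : ∀ i, 1 ≤ i → i + 1 ≤ d → k ≤ (lv ℓ i).card := by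
    intro i h1 h2
    by_contra hc
    push_neg at hc
    have hScard : (↑(lv ℓ i) : Set V).ncard < k := by
      rw [Set.ncard_coe_finset]; exact hc
    have hconn2 := hG.2 _ hScard
    have hx : x ∈ (↑(lv ℓ i) : Set V)ᶜ := by
      simp only [Set.mem_compl_iff, Finset.coe_sort_coe, Finset.mem_coe, mem_lv]
      omega
    have hy : y ∈ (↑(lv ℓ i) : Set V)ᶜ := by
      simp only [Set.mem_compl_iff, Finset.coe_sort_coe, Finset.mem_coe, mem_lv]
      omega
    obtain ⟨p⟩ := hconn2.preconnected ⟨x, hx⟩ ⟨y, hy⟩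
    have hlip2 : ∀ (u v : ((↑(lv ℓ i) : Set V)ᶜ : Set V)),
        (G.induce (↑(lv ℓ i) : Set V)ᶜ).Adj u v →
        Nat.dist (ℓ u.val) (ℓ v.val) ≤ 1 := by
      intro u v huv
      exact hlip _ _ huv
    obtain ⟨w, _, hw⟩ := walk_ivt (f := fun z => ℓ z.val) hlip2 p i
      (by show ℓ x ≤ i; omega) (by show i ≤ ℓ y; omega)
    exact w.2 (by simp only [Finset.coe_sort_coe, Finset.mem_coe, mem_lv]; exact hw)
  have hle : G ≤ lvlGraph ℓ := by
    intro u v h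
    exact ⟨G.ne_of_adj h, hlip u v h⟩
  have hkc := lvlGraph_kconn hk hd hG.1 hfd hne hkk
  have hdm := lvlGraph_diam (by omega) hfd hne
  have hcount := hmax V (lvlGraph ℓ) hkc hcard hdm
  have hGeq : G = lvlGraph ℓ := by
    rw [← SimpleGraph.edgeSet_inj]
    exact Set.eq_of_subset_of_ncard_le (SimpleGraph.edgeSet_mono hle) hcount (Set.toFinite _)
  have hadj : ∀ u v, u ≠ v → Nat.dist (ℓ u) (ℓ v) ≤ 1 → G.Adj u v := by
    intro u v h1 h2
    rw [hGeq]
    exact ⟨h1, h2⟩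
  have hadj' : ∀ u v, G.Adj u v → Nat.dist (ℓ u) (ℓ v) ≤ 1 := hlip
  have hlv0 : lv ℓ 0 = {x} := by
    ext v
    rw [mem_lv, Finset.mem_singleton]
    constructor
    · intro h
      exact (hconn.dist_eq_zero_iff.mp h).symm
    · intro h
      subst h; exact hlx
  -- surplus levels
  have hAwin : ∀ a b : ℕ, 1 ≤ a → b ≤ d →
      (if a + 1 ≤ d then k else 1) + 1 ≤ (lv ℓ a).card →
      (if b + 1 ≤ d then k else 1) + 1 ≤ (lv ℓ b).card →
      a + 2 ≤ b → False := by
    intro a b ha1 hbd hsa hsb hab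
    have hba : a + 1 ≤ d := by omega
    rw [if_pos hba] at hsa
    refine exchange hk hd hcard hG.1 hGeq hfd hne hkk hmax hab hbd hsa ?_ ?_
    · split at hsb <;> omega
    · intro h; rw [if_pos h] at hsb; exact hsb
  -- choose the parts
  have exT : ∀ i : ℕ, ∃ t : Finset V, t ⊆ lv ℓ i ∧
      (i = 0 → t = {x}) ∧ (1 ≤ i → i < d → t.card = k) ∧
      (i = d → t.card = 1) ∧ (d < i → t = ∅) := by
    intro i
    rcases Nat.eq_zero_or_pos i with h0 | h1
    · subst h0
      exact ⟨{x}, by rw [hlv0], fun _ => rfl, by omega, by omega, by omega⟩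
    · rcases Nat.lt_or_ge i d with hlt | hge
      · obtain ⟨t, ht1, ht2⟩ := Finset.exists_subset_card_eq (hkk i h1 hlt)
        exact ⟨t, ht1, by omega, fun _ _ => ht2, by omega, by omega⟩
      · rcases Nat.eq_or_lt_of_le hge with heq | hgt
        · obtain ⟨t, ht1, ht2⟩ := Finset.exists_subset_card_eq
            (Finset.one_le_card.mpr (hne i (le_of_eq heq.symm)))
          exact ⟨t, ht1, by omega, by omega, fun _ => ht2, by omega⟩
        · exact ⟨∅, Finset.empty_subset _, by omega, by omega, by omega, fun _ => rfl⟩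
  choose T hT1 hT2 hT3 hT4 hT5 using exT
  have hTlev : ∀ m, ∀ v, v ∈ T m → ℓ v = m ∧ m ≤ d := by
    intro m v hv
    rcases Nat.lt_or_ge d m with h | h
    · rw [hT5 m h] at hv; exact absurd hv (Finset.notMem_empty v)
    · exact ⟨mem_lv.mp (hT1 m hv), h⟩
  -- parts equal full levels when no surplus
  have hTeq : ∀ i, 1 ≤ i → i ≤ d →
      ¬ ((if i + 1 ≤ d then k else 1) + 1 ≤ (lv ℓ i).card) → T i = lv ℓ i := by
    intro i h1 h2 hns
    rcases Nat.lt_or_ge i d with hlt | hge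
    · rw [if_pos (by omega)] at hns
      exact Finset.eq_of_subset_of_card_le (hT1 i)
        (by rw [hT3 i h1 hlt]; omega)
    · have heq : i = d := by omega
      rw [if_neg (by omega)] at hns
      exact Finset.eq_of_subset_of_card_le (hT1 i)
        (by rw [hT4 i heq]; omega)
  have hT0eq : T 0 = lv ℓ 0 := by rw [hT2 0 rfl, hlv0]
  -- every vertex outside T has a surplus level
  have hRsur : ∀ r : V, (∀ m, m ≤ d → r ∉ T m) →
      1 ≤ ℓ r ∧ ℓ r ≤ d ∧ (if ℓ r + 1 ≤ d then k else 1) + 1 ≤ (lv ℓ (ℓ r)).card := by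
    intro r hr
    have hrd := hfd r
    have hrl : r ∈ lv ℓ (ℓ r) := mem_lv.mpr rfl
    have hr1 : 1 ≤ ℓ r := by
      by_contra hc
      have h0 : ℓ r = 0 := by omega
      exact hr 0 (by omega) (by rw [hT0eq, ← h0]; exact hrl)
    refine ⟨hr1, hrd, ?_⟩
    by_contra hc
    exact hr (ℓ r) hrd (by rw [hTeq (ℓ r) hr1 hrd hc]; exact hrl)
  refine ⟨T, by rw [hT2 0 rfl]; simp, hT4 d rfl, fun i h1 h2 => hT3 i h1 h2,
    fun i h => hT5 i h, ?_, ?_, ?_, ?_⟩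
  · -- disjointness
    intro i j hij
    rw [Finset.disjoint_left]
    intro a ha haj
    have h1 := (hTlev i a ha).1
    have h2 := (hTlev j a haj).1
    omega
  · -- each part is a clique
    intro i u hu v hv huv
    have h1 := (hTlev i u hu).1
    have h2 := (hTlev i v hv).1
    exact hadj u v huv (by rw [h1, h2]; simp [Nat.dist])
  · -- consecutive parts joined
    intro i _ u hu v hv
    have h1 := (hTlev i u hu).1
    have h2 := (hTlev (i+1) v hv).1
    refine hadj u v (fun h => by rw [h, h2] at h1; omega) ?_
    rw [h1, h2]; simp [Nat.dist]
  · -- R statements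
    have hmemT : ∀ r : V, r ∉ (Finset.range (d + 1)).biUnion T → ∀ m, m ≤ d → r ∉ T m := by
      intro r hrn m hm hmem
      exact hrn (Finset.mem_biUnion.mpr ⟨m, Finset.mem_range.mpr (by omega), hmem⟩)
    have hvT : ∀ v : V, v ∈ (Finset.range (d + 1)).biUnion T → v ∈ T (ℓ v) := by
      intro v hv
      obtain ⟨m, _, hm2⟩ := Finset.mem_biUnion.mp hv
      rwa [(hTlev m v hm2).1]
    by_cases hAne : ∃ i, 1 ≤ i ∧ i ≤ d ∧ (if i + 1 ≤ d then k else 1) + 1 ≤ (lv ℓ i).card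
    · -- there is a surplus level; take the least one
      obtain ⟨a0, ha0⟩ := hAne
      -- minimal surplus level
      have hwf : ∃ a, (1 ≤ a ∧ a ≤ d ∧ (if a + 1 ≤ d then k else 1) + 1 ≤ (lv ℓ a).card) ∧
          ∀ b, (1 ≤ b ∧ b ≤ d ∧ (if b + 1 ≤ d then k else 1) + 1 ≤ (lv ℓ b).card) → a ≤ b := by
        classical
        obtain ⟨a, ha, hmin⟩ :=
          Finset.exists_min_image ((Finset.range (d+1)).filter
            (fun i => 1 ≤ i ∧ i ≤ d ∧ (if i + 1 ≤ d then k else 1) + 1 ≤ (lv ℓ i).card))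
            id ⟨a0, Finset.mem_filter.mpr ⟨Finset.mem_range.mpr (by omega), ha0⟩⟩
        refine ⟨a, (Finset.mem_filter.mp ha).2, fun b hb => ?_⟩
        exact hmin b (Finset.mem_filter.mpr ⟨Finset.mem_range.mpr (by omega), hb⟩)
      obtain ⟨a, ⟨ha1, had, hasur⟩, hamin⟩ := hwf
      -- all surplus levels are a or a+1
      have hsurwin : ∀ i, 1 ≤ i → i ≤ d →
          ((if i + 1 ≤ d then k else 1) + 1 ≤ (lv ℓ i).card) → i = a ∨ i = a + 1 := by
        intro i h1 h2 h3
        have hai : a ≤ i := hamin i ⟨h1, h2, h3⟩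
        rcases Nat.lt_or_ge (a + 1) i with hgt | hle2
        · exact absurd (hAwin a i ha1 h2 hasur h3 (by omega)) id
        · omega
      have hRlev : ∀ r : V, r ∈ ((Finset.range (d + 1)).biUnion T)ᶜ →
          ℓ r = a ∨ ℓ r = a + 1 := by
        intro r hr
        rw [Finset.mem_compl] at hr
        obtain ⟨h1, h2, h3⟩ := hRsur r (hmemT r hr)
        exact hsurwin (ℓ r) h1 h2 h3
      refine ⟨?_, ?_, ⟨a - 1, ?_, ?_⟩⟩
      · -- R is a clique
        intro u hu v hv huv
        have h1 := hRlev u hu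
        have h2 := hRlev v hv
        refine hadj u v huv ?_
        simp only [Nat.dist]
        omega
      · -- three consecutive parts per vertex
        intro r hr
        rw [Finset.mem_compl] at hr
        obtain ⟨hr1, hr2, _⟩ := hRsur r (hmemT r hr)
        refine ⟨ℓ r - 1, fun v hv hadjv => ?_⟩
        have hvv := hvT v hv
        have hdist := hadj' r v hadjv
        have hl3 : ℓ v = ℓ r - 1 ∨ ℓ v = (ℓ r - 1) + 1 ∨ ℓ v = (ℓ r - 1) + 2 := by
          simp only [Nat.dist] at hdist
          omega
        rcases hl3 with h | h | h
        · exact Finset.mem_union_left _ (Finset.mem_union_left _ (h ▸ hvv))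
        · exact Finset.mem_union_left _ (Finset.mem_union_right _ (h ▸ hvv))
        · exact Finset.mem_union_right _ (h ▸ hvv)
      · -- four-window
        intro r hr v hv hadjv
        have h1 := hRlev r hr
        have hvv := hvT v hv
        have hdist := hadj' r v hadjv
        have hl4 : ℓ v = a - 1 ∨ ℓ v = (a - 1) + 1 ∨ ℓ v = (a - 1) + 2 ∨
            ℓ v = (a - 1) + 3 := by
          simp only [Nat.dist] at hdist
          omega
        rcases hl4 with h | h | h | h
        · exact Finset.mem_union_left _ (Finset.mem_union_left _
            (Finset.mem_union_left _ (h ▸ hvv)))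
        · exact Finset.mem_union_left _ (Finset.mem_union_left _
            (Finset.mem_union_right _ (h ▸ hvv)))
        · exact Finset.mem_union_left _ (Finset.mem_union_right _ (h ▸ hvv))
        · exact Finset.mem_union_right _ (h ▸ hvv)
      · -- first three or last three
        intro r hr
        have h1 := hRlev r hr
        rw [Finset.mem_compl] at hr
        have hrT : ∀ m, m ≤ d → r ∉ T m := hmemT r hr
        have key : ∀ m v, v ∈ T m → Nat.dist (ℓ r) m ≤ 1 → G.Adj r v := by
          intro m v hv hdist
          have h2 := hTlev m v hv
          refine hadj r v (fun h => ?_) (by rw [h2.1]; exact hdist)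
          exact hrT m h2.2 (h ▸ hv)
        rcases h1 with h | h
        · left
          intro v hv
          simp only [Finset.mem_union] at hv
          rcases hv with (hv | hv) | hv
          · exact key _ v hv (by simp only [Nat.dist]; omega)
          · exact key _ v hv (by simp only [Nat.dist]; omega)
          · exact key _ v hv (by simp only [Nat.dist]; omega)
        · right
          intro v hv
          simp only [Finset.mem_union] at hv
          rcases hv with (hv | hv) | hv
          · exact key _ v hv (by simp only [Nat.dist]; omega)
          · exact key _ v hv (by simp only [Nat.dist]; omega)
          · exact key _ v hv (by simp only [Nat.dist]; omega)
    · -- no surplus: R is empty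
      push_neg at hAne
      have hRempty : ∀ r : V, r ∈ ((Finset.range (d + 1)).biUnion T)ᶜ → False := by
        intro r hr
        rw [Finset.mem_compl] at hr
        obtain ⟨h1, h2, h3⟩ := hRsur r (hmemT r hr)
        exact absurd h3 (by exact Nat.not_le.mpr (hAne (ℓ r) h1 h2))
      exact ⟨fun u hu => absurd (hRempty u hu) not_false,
        fun r hr => absurd (hRempty r hr) not_false,
        ⟨0, fun r hr => absurd (hRempty r hr) not_false,
          fun r hr => absurd (hRempty r hr) not_false⟩⟩
end
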